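/- arXiv:0908.2988 — 2 statements merged into one kernel-verified Lean document; each statement's English description precedes it below -/
import Mathlib

section
/- Let H ⊆ ℝ^d be a closed halfspace, i.e. H = {y ∈ ℝ^d : c_1 y_1 + ⋯ + c_d y_d ≤ t} for some nonzero c ∈ ℝ^d and t ∈ ℝ. Let rk_1,…,rk_n be megamatroids on {1,…,d}, all of the same rank r, and let a_1,…,a_n be integers such that Σ_{m=1}^n a_m [Q(rk_m)] = 0 as a function ℝ^d → ℤ. Then Σ_{m : Q(rk_m) ⊆ H} a_m = 0. -/
open scoped BigOperators

/-- A megamatroid on the ground set `{1,…,d}` (modeled as `Fin d`): a function from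
subsets to `ℤ ∪ {∞}` with `rk ∅ = 0`, `rk univ` finite, and submodularity on finite values. -/
structure Megamatroid (d : ℕ) where
  rk : Finset (Fin d) → WithTop ℤ
  rk_empty : rk ∅ = 0
  rk_univ_ne_top : rk Finset.univ ≠ ⊤
  submodular : ∀ A B : Finset (Fin d), rk A ≠ ⊤ → rk B ≠ ⊤ →
    rk (A ∪ B) ≠ ⊤ ∧ rk (A ∩ B) ≠ ⊤ ∧ rk (A ∪ B) + rk (A ∩ B) ≤ rk A + rk B

/-- The base polyhedron `Q(rk)` of a megamatroid: points `y ∈ ℝ^d` with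
`∑ i, y i = rk(univ)` and `∑ i ∈ A, y i ≤ rk A` whenever `rk A` is finite. -/
def megaQ {d : ℕ} (M : Megamatroid d) : Set (Fin d → ℝ) :=
  {y | (∀ z : ℤ, M.rk Finset.univ = (z : WithTop ℤ) → ∑ i, y i = (z : ℝ)) ∧
    ∀ A : Finset (Fin d), ∀ z : ℤ, M.rk A = (z : WithTop ℤ) → ∑ i ∈ A, y i ≤ (z : ℝ)}


attribute [local instance] Classical.propDecidable

/-- The indicator function `[Π] : ℝ^d → ℤ` of a subset `Π ⊆ ℝ^d`. -/
noncomputable def indFn {d : ℕ} (P : Set (Fin d → ℝ)) : (Fin d → ℝ) → ℤ :=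
  P.indicator fun _ => 1



lemma oneD {n : ℕ} (a : Fin n → ℤ) (ne : Fin n → Prop) (p q : Fin n → ℝ)
    (hpq : ∀ m, ne m → p m ≤ q m)
    (h : ∀ σ : ℝ, ∑ m, (if ne m ∧ p m ≤ σ ∧ σ ≤ q m then a m else 0) = 0) :
    ∑ m, (if ne m then a m else 0) = 0 := by
  classical
  set T : Finset (Fin n) := Finset.univ.filter (fun m => ne m) with hT
  have hgoal : ∑ m, (if ne m then a m else 0) = ∑ m ∈ T, a m := by
    rw [hT, Finset.sum_filter]
  rw [hgoal]
  set V : Finset ℝ := T.image p ∪ T.image q with hV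
  have h' : ∀ σ : ℝ, ∑ m ∈ T, (if p m ≤ σ ∧ σ ≤ q m then a m else 0) = 0 := by
    intro σ
    calc ∑ m ∈ T, (if p m ≤ σ ∧ σ ≤ q m then a m else 0)
        = ∑ m, (if ne m ∧ p m ≤ σ ∧ σ ≤ q m then a m else 0) := by
          rw [hT, Finset.sum_filter]
          apply Finset.sum_congr rfl
          intro m _
          by_cases h1 : ne m <;> by_cases h2 : p m ≤ σ ∧ σ ≤ q m <;> simp [h1, h2]
      _ = 0 := h σ
  have maps : ∀ m ∈ T, p m ∈ T.image p := fun m hm => Finset.mem_image_of_mem p hm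
  rw [← Finset.sum_fiberwise_of_maps_to maps]
  apply Finset.sum_eq_zero
  intro v hv
  -- choose τ
  obtain ⟨τ, hτv, hτ⟩ : ∃ τ : ℝ, τ < v ∧ ∀ x ∈ V, x < v → x < τ := by
    by_cases hW : (V.filter (fun x => x < v)).Nonempty
    · obtain ⟨m', hm'mem, hm'max⟩ := Finset.exists_max_image (V.filter (fun x => x < v)) id hW
      have hm'v : m' < v := (Finset.mem_filter.mp hm'mem).2
      refine ⟨(m' + v) / 2, by linarith, ?_⟩
      intro x hx hxv
      have : x ≤ m' := hm'max x (Finset.mem_filter.mpr ⟨hx, hxv⟩)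
      linarith
    · refine ⟨v - 1, by linarith, ?_⟩
      intro x hx hxv
      exact absurd ⟨x, Finset.mem_filter.mpr ⟨hx, hxv⟩⟩ hW
  have key : ∀ m ∈ T, ((if p m ≤ v ∧ v ≤ q m then a m else 0)
      - (if p m ≤ τ ∧ τ ≤ q m then a m else 0)) = if p m = v then a m else 0 := by
    intro m hm
    have hnem : ne m := (Finset.mem_filter.mp hm).2
    have hpV : p m ∈ V := Finset.mem_union_left _ (Finset.mem_image_of_mem p hm)
    have hqV : q m ∈ V := Finset.mem_union_right _ (Finset.mem_image_of_mem q hm)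
    by_cases hpv : p m = v
    · have h1 : p m ≤ v ∧ v ≤ q m := ⟨le_of_eq hpv, hpv ▸ hpq m hnem⟩
      have h2 : ¬(p m ≤ τ ∧ τ ≤ q m) := fun hc => absurd (hpv ▸ hc.1) (not_le.mpr hτv)
      rw [if_pos h1, if_neg h2, if_pos hpv, sub_zero]
    · have hiff : (p m ≤ v ∧ v ≤ q m) ↔ (p m ≤ τ ∧ τ ≤ q m) := by
        constructor
        · rintro ⟨h1, h2⟩
          exact ⟨le_of_lt (hτ _ hpV (lt_of_le_of_ne h1 hpv)), le_trans (le_of_lt hτv) h2⟩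
        · rintro ⟨h1, h2⟩
          refine ⟨le_trans h1 (le_of_lt hτv), ?_⟩
          by_contra hcon
          exact absurd h2 (not_le.mpr (hτ _ hqV (not_le.mp hcon)))
      by_cases h1 : p m ≤ v ∧ v ≤ q m
      · rw [if_pos h1, if_pos (hiff.mp h1), if_neg hpv, sub_self]
      · rw [if_neg h1, if_neg (fun hc => h1 (hiff.mpr hc)), if_neg hpv, sub_zero]
  have : ∑ m ∈ T, (if p m = v then a m else 0) = 0 := by
    rw [← Finset.sum_congr rfl key, Finset.sum_sub_distrib, h' v, h' τ, sub_zero]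
  rw [← this, Finset.sum_filter]


lemma snoc_comb {d : ℕ} (x y : Fin d → ℝ) (u v σ : ℝ) (huv : u + v = 1) :
    (Fin.snoc (u • x + v • y) σ : Fin (d+1) → ℝ)
      = u • (Fin.snoc x σ : Fin (d+1) → ℝ) + v • (Fin.snoc y σ : Fin (d+1) → ℝ) := by
  funext i
  refine Fin.lastCases ?_ ?_ i
  · simp only [Fin.snoc_last, Pi.add_apply, Pi.smul_apply, smul_eq_mul]
    rw [← add_mul, huv, one_mul]
  · intro j
    simp only [Fin.snoc_castSucc, Pi.add_apply, Pi.smul_apply, smul_eq_mul]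

lemma snoc_continuous {d : ℕ} (σ : ℝ) : Continuous (fun x : Fin d → ℝ => (Fin.snoc x σ : Fin (d+1) → ℝ)) := by
  apply continuous_pi
  intro i
  refine Fin.lastCases ?_ ?_ i
  · simp only [Fin.snoc_last]
    exact continuous_const
  · intro j
    simp only [Fin.snoc_castSucc]
    exact continuous_apply j

lemma euler : ∀ (d n : ℕ) (a : Fin n → ℤ) (C : Fin n → Set (Fin d → ℝ)),
    (∀ m, Convex ℝ (C m)) → (∀ m, IsCompact (C m)) →
    (∀ x : Fin d → ℝ, ∑ m, a m * (C m).indicator (fun _ => (1:ℤ)) x = 0) →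
    ∑ m, (if (C m).Nonempty then a m else 0) = 0 := by
  intro d
  induction d with
  | zero =>
    intro n a C hconv hcomp h
    refine Eq.trans (Finset.sum_congr rfl ?_) (h (fun i => (0:ℝ)))
    intro m _
    by_cases hm : (C m).Nonempty
    · obtain ⟨x, hx⟩ := hm
      have hx0 : (fun _ : Fin 0 => (0:ℝ)) ∈ C m := by
        have : x = (fun _ : Fin 0 => (0:ℝ)) := Subsingleton.elim _ _
        exact this ▸ hx
      rw [if_pos ⟨x, hx⟩, Set.indicator_of_mem hx0, mul_one]
    · rw [if_neg hm, Set.indicator_of_notMem (fun hx => hm ⟨_, hx⟩), mul_zero]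
  | succ d ih =>
    intro n a C hconv hcomp h
    set S : Fin n → ℝ → Set (Fin d → ℝ) := fun m σ => {x | Fin.snoc x σ ∈ C m} with hS
    set I : Fin n → Set ℝ := fun m => (fun y : Fin (d+1) → ℝ => y (Fin.last d)) '' (C m) with hI
    have hSconv : ∀ m σ, Convex ℝ (S m σ) := by
      intro m σ x hx y hy u v hu hv huv
      show Fin.snoc (u • x + v • y) σ ∈ C m
      rw [snoc_comb x y u v σ huv]
      exact hconv m hx hy hu hv huv
    have hScomp : ∀ m σ, IsCompact (S m σ) := by
      intro m σ
      have hcl : IsClosed (S m σ) := (hcomp m).isClosed.preimage (snoc_continuous σ)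
      obtain ⟨R, hR⟩ := ((hcomp m).isBounded).subset_closedBall 0
      have hbd : S m σ ⊆ Metric.closedBall 0 R := by
        intro x hx
        have hmem : Fin.snoc x σ ∈ Metric.closedBall (0 : Fin (d+1) → ℝ) R := hR hx
        rw [Metric.mem_closedBall, dist_zero_right] at hmem ⊢
        have hR0 : (0:ℝ) ≤ R := le_trans (norm_nonneg _) hmem
        rw [pi_norm_le_iff_of_nonneg hR0]
        intro j
        calc ‖x j‖ = ‖(Fin.snoc x σ : Fin (d+1) → ℝ) (Fin.castSucc j)‖ := by rw [Fin.snoc_castSucc]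
          _ ≤ ‖(Fin.snoc x σ : Fin (d+1) → ℝ)‖ := norm_le_pi_norm _ _
          _ ≤ R := hmem
      exact (isCompact_closedBall _ _).of_isClosed_subset hcl hbd
    have hmemiff : ∀ m σ, (S m σ).Nonempty ↔ σ ∈ I m := by
      intro m σ
      constructor
      · rintro ⟨x, hx⟩
        exact ⟨Fin.snoc x σ, hx, Fin.snoc_last _ _⟩
      · rintro ⟨y, hy, hlast⟩
        refine ⟨Fin.init y, ?_⟩
        show Fin.snoc (Fin.init y) σ ∈ C m
        rw [← hlast, Fin.snoc_init_self]
        exact hy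
    have hIcomp : ∀ m, IsCompact (I m) := fun m => (hcomp m).image (continuous_apply _)
    have hIconv : ∀ m, Convex ℝ (I m) := by
      intro m
      have := (hconv m).linear_image (LinearMap.proj (R := ℝ) (φ := fun _ : Fin (d+1) => ℝ) (Fin.last d))
      simpa [LinearMap.proj_apply] using this
    have hIne : ∀ m, (C m).Nonempty ↔ (I m).Nonempty := by
      intro m
      constructor
      · rintro ⟨y, hy⟩; exact ⟨_, ⟨y, hy, rfl⟩⟩
      · rintro ⟨σ, y, hy, -⟩; exact ⟨y, hy⟩
    have hIeq : ∀ m, (C m).Nonempty → ∀ σ : ℝ, σ ∈ I m ↔ (sInf (I m) ≤ σ ∧ σ ≤ sSup (I m)) := by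
      intro m hm σ
      have hne : (I m).Nonempty := (hIne m).mp hm
      constructor
      · intro hσ
        exact ⟨csInf_le (hIcomp m).bddBelow hσ, le_csSup (hIcomp m).bddAbove hσ⟩
      · rintro ⟨h1, h2⟩
        have hInf : sInf (I m) ∈ I m := (hIcomp m).sInf_mem hne
        have hSup : sSup (I m) ∈ I m := (hIcomp m).sSup_mem hne
        exact (hIconv m).ordConnected.out hInf hSup ⟨h1, h2⟩
    apply oneD a (fun m => (C m).Nonempty) (fun m => sInf (I m)) (fun m => sSup (I m))
    · intro m hm
      obtain ⟨σ, hσ⟩ := (hIne m).mp hm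
      exact le_trans (csInf_le (hIcomp m).bddBelow hσ) (le_csSup (hIcomp m).bddAbove hσ)
    · intro σ
      have hIH : ∑ m, (if (S m σ).Nonempty then a m else 0) = 0 := by
        apply ih n a (fun m => S m σ) (fun m => hSconv m σ) (fun m => hScomp m σ)
        intro x
        refine Eq.trans (Finset.sum_congr rfl ?_) (h (Fin.snoc x σ))
        intro m _
        congr 1
      refine Eq.trans (Finset.sum_congr rfl ?_) hIH
      intro m _
      have hiff : ((C m).Nonempty ∧ sInf (I m) ≤ σ ∧ σ ≤ sSup (I m)) ↔ (S m σ).Nonempty := by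
        constructor
        · intro ⟨hCm, h1, h2⟩
          exact (hmemiff m σ).mpr ((hIeq m hCm σ).mpr ⟨h1, h2⟩)
        · intro hs
          have hσI : σ ∈ I m := (hmemiff m σ).mp hs
          have hCm : (C m).Nonempty := (hIne m).mpr ⟨σ, hσI⟩
          exact ⟨hCm, (hIeq m hCm σ).mp hσI⟩
      exact if_congr hiff rfl rfl




noncomputable def rkZ {d : ℕ} (M : Megamatroid d) (A : Finset (Fin d)) : ℤ :=
  WithTop.untopD 0 (M.rk A)

lemma rk_coe {d : ℕ} (M : Megamatroid d) {A : Finset (Fin d)} (h : M.rk A ≠ ⊤) :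
    M.rk A = (rkZ M A : WithTop ℤ) := by
  obtain ⟨z, hz⟩ := WithTop.ne_top_iff_exists.mp h
  rw [← hz, rkZ, ← hz, WithTop.untopD_coe]

lemma rkZ_empty {d : ℕ} (M : Megamatroid d) : rkZ M ∅ = 0 := by
  rw [rkZ, M.rk_empty]; rfl

lemma mem_megaQ_iff {d : ℕ} (M : Megamatroid d) (y : Fin d → ℝ) :
    y ∈ megaQ M ↔ (∑ i, y i = (rkZ M Finset.univ : ℝ)) ∧
      ∀ A : Finset (Fin d), M.rk A ≠ ⊤ → ∑ i ∈ A, y i ≤ (rkZ M A : ℝ) := by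
  constructor
  · rintro ⟨h1, h2⟩
    exact ⟨h1 _ (rk_coe M M.rk_univ_ne_top), fun A hA => h2 A _ (rk_coe M hA)⟩
  · rintro ⟨h1, h2⟩
    constructor
    · intro z hz
      have hne : M.rk Finset.univ ≠ ⊤ := M.rk_univ_ne_top
      have : (rkZ M Finset.univ : WithTop ℤ) = (z : WithTop ℤ) := (rk_coe M hne) ▸ hz
      have hzz : rkZ M Finset.univ = z := WithTop.coe_inj.mp this
      rw [← hzz]; exact h1
    · intro A z hz
      have hne : M.rk A ≠ ⊤ := by rw [hz]; exact WithTop.coe_ne_top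
      have : (rkZ M A : WithTop ℤ) = (z : WithTop ℤ) := (rk_coe M hne) ▸ hz
      have hzz : rkZ M A = z := WithTop.coe_inj.mp this
      rw [← hzz]; exact h2 A hne

lemma submodZ {d : ℕ} (M : Megamatroid d) {A B : Finset (Fin d)}
    (hA : M.rk A ≠ ⊤) (hB : M.rk B ≠ ⊤) :
    M.rk (A ∪ B) ≠ ⊤ ∧ M.rk (A ∩ B) ≠ ⊤ ∧
      rkZ M (A ∪ B) + rkZ M (A ∩ B) ≤ rkZ M A + rkZ M B := by
  obtain ⟨hU, hI, hle⟩ := M.submodular A B hA hB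
  refine ⟨hU, hI, ?_⟩
  rw [rk_coe M hU, rk_coe M hI, rk_coe M hA, rk_coe M hB] at hle
  exact_mod_cast hle


lemma megaQ_nonempty {d : ℕ} (M : Megamatroid d) : (megaQ M).Nonempty := by
  classical
  suffices h : ∀ (k : ℕ) (C : Finset (Fin d)), C.card ≤ k → M.rk C ≠ ⊤ →
      ∃ y : Fin d → ℝ, (∀ i, i ∉ C → y i = 0) ∧ (∑ i ∈ C, y i = (rkZ M C : ℝ)) ∧
        (∀ A, M.rk A ≠ ⊤ → ∑ i ∈ A ∩ C, y i ≤ (rkZ M (A ∩ C) : ℝ)) by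
    obtain ⟨y, -, h1, h2⟩ := h (Finset.univ.card) Finset.univ le_rfl M.rk_univ_ne_top
    refine ⟨y, (mem_megaQ_iff M y).mpr ⟨h1, ?_⟩⟩
    intro A hA
    have := h2 A hA
    rwa [Finset.inter_univ] at this
  intro k
  induction k with
  | zero =>
    intro C hC hCfin
    have hCe : C = ∅ := Finset.card_eq_zero.mp (Nat.le_zero.mp hC)
    subst hCe
    exact ⟨0, fun i _ => rfl, by simp [rkZ_empty],
      fun A hA => by simp [Finset.inter_empty, rkZ_empty]⟩
  | succ k ih =>
    intro C hC hCfin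
    by_cases hCe : C = ∅
    · subst hCe
      exact ⟨0, fun i _ => rfl, by simp [rkZ_empty],
        fun A hA => by simp [Finset.inter_empty, rkZ_empty]⟩
    -- choose a maximal-cardinality proper subset with finite rank
    have hPne : (C.powerset.filter (fun C' => M.rk C' ≠ ⊤ ∧ C' ⊂ C)).Nonempty := by
      refine ⟨∅, Finset.mem_filter.mpr ⟨Finset.empty_mem_powerset C, ?_, ?_⟩⟩
      · rw [M.rk_empty]; exact WithTop.zero_ne_top
      · exact Finset.empty_ssubset.mpr (Finset.nonempty_iff_ne_empty.mpr hCe)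
    obtain ⟨C', hC'mem, hmax⟩ :=
      Finset.exists_max_image (C.powerset.filter (fun C' => M.rk C' ≠ ⊤ ∧ C' ⊂ C))
        (fun s => s.card) hPne
    obtain ⟨hC'pow, hC'fin, hC'ss⟩ := Finset.mem_filter.mp hC'mem
    have hC'sub : C' ⊆ C := hC'ss.1
    have hcard : C'.card ≤ k :=
      Nat.lt_succ_iff.mp (lt_of_lt_of_le (Finset.card_lt_card hC'ss) hC)
    obtain ⟨y, hsupp, hsum, hinv⟩ := ih C' hcard hC'fin
    set B := C \ C' with hB
    have hBne : B.Nonempty := by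
      rw [hB, Finset.sdiff_nonempty]
      exact hC'ss.2
    have hBcard : (B.card : ℝ) ≠ 0 := Nat.cast_ne_zero.mpr (Finset.card_ne_zero.mpr hBne)
    have hCsplit : C' ∪ B = C := Finset.union_sdiff_of_subset hC'sub
    set δ : ℤ := rkZ M C - rkZ M C' with hδ
    set z : Fin d → ℝ := fun i => if i ∈ B then (δ : ℝ) / (B.card : ℝ) else 0 with hz
    have hzB : ∀ (s : Finset (Fin d)), B ⊆ s → ∑ i ∈ s, z i = (δ : ℝ) := by
      intro s hs
      have : ∑ i ∈ s, z i = ∑ i ∈ B, z i := by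
        refine (Finset.sum_subset hs ?_).symm
        intro i _ hiB
        rw [hz]
        exact if_neg hiB
      rw [this]
      have : ∑ i ∈ B, z i = (B.card : ℝ) * ((δ : ℝ) / (B.card : ℝ)) := by
        rw [Finset.sum_congr rfl (fun i hi => if_pos hi), Finset.sum_const, nsmul_eq_mul]
      rw [this, mul_comm, div_mul_cancel₀ _ hBcard]
    have hzoff : ∀ (s : Finset (Fin d)), Disjoint s B → ∑ i ∈ s, z i = 0 := by
      intro s hs
      apply Finset.sum_eq_zero
      intro i hi
      rw [hz]
      exact if_neg (Finset.disjoint_left.mp hs hi)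
    have hysum : ∀ (s : Finset (Fin d)), C' ⊆ s → ∑ i ∈ s, y i = ∑ i ∈ C', y i := by
      intro s hs
      refine (Finset.sum_subset hs ?_).symm
      intro i _ hiC'
      exact hsupp i hiC'
    refine ⟨y + z, ?_, ?_, ?_⟩
    · intro i hiC
      have h1 : y i = 0 := hsupp i (fun hi => hiC (hC'sub hi))
      have h2 : z i = 0 := by
        rw [hz]
        exact if_neg (fun hi => hiC (Finset.sdiff_subset hi))
      show y i + z i = 0
      rw [h1, h2, add_zero]
    · have : ∑ i ∈ C, (y i + z i) = ∑ i ∈ C, y i + ∑ i ∈ C, z i := Finset.sum_add_distrib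
      show ∑ i ∈ C, (y i + z i) = (rkZ M C : ℝ)
      rw [this, hysum C hC'sub, hsum, hzB C (by rw [← hCsplit]; exact Finset.subset_union_right)]
      push_cast [hδ]
      ring
    · intro A hA
      have hAC'fin : M.rk (A ∩ C') ≠ ⊤ := (submodZ M hA hC'fin).2.1
      have hACfin : M.rk (A ∩ C) ≠ ⊤ := (submodZ M hA hCfin).2.1
      -- dichotomy
      have hdi : A ∩ B = ∅ ∨ B ⊆ A := by
        have hUfin : M.rk (A ∪ C') ≠ ⊤ := (submodZ M hA hC'fin).1
        have hEfin : M.rk ((A ∪ C') ∩ C) ≠ ⊤ := (submodZ M hUfin hCfin).2.1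
        have hC'E : C' ⊆ (A ∪ C') ∩ C :=
          Finset.subset_inter Finset.subset_union_right hC'sub
        have hEC : (A ∪ C') ∩ C ⊆ C := Finset.inter_subset_right
        by_cases hEeq : (A ∪ C') ∩ C = C
        · right
          intro i hiB
          have hiC : i ∈ C := Finset.sdiff_subset hiB
          have hiC' : i ∉ C' := (Finset.mem_sdiff.mp hiB).2
          have : i ∈ (A ∪ C') ∩ C := by rw [hEeq]; exact hiC
          rcases Finset.mem_union.mp (Finset.mem_inter.mp this).1 with h | h
          · exact h
          · exact absurd h hiC'
        · left
          have hEss : (A ∪ C') ∩ C ⊂ C := Finset.ssubset_iff_subset_ne.mpr ⟨hEC, hEeq⟩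
          have hle : ((A ∪ C') ∩ C).card ≤ C'.card :=
            hmax _ (Finset.mem_filter.mpr
              ⟨Finset.mem_powerset.mpr hEC, hEfin, hEss⟩)
          have hEeqC' : C' = (A ∪ C') ∩ C := Finset.eq_of_subset_of_card_le hC'E hle
          rw [Finset.eq_empty_iff_forall_notMem]
          intro i hi
          obtain ⟨hiA, hiB⟩ := Finset.mem_inter.mp hi
          have hiC : i ∈ C := Finset.sdiff_subset hiB
          have hiC' : i ∉ C' := (Finset.mem_sdiff.mp hiB).2
          have : i ∈ (A ∪ C') ∩ C :=
            Finset.mem_inter.mpr ⟨Finset.mem_union_left _ hiA, hiC⟩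
          exact hiC' (by rw [hEeqC']; exact this)
      have hACsplit : A ∩ C = (A ∩ C') ∪ (A ∩ B) := by
        rw [← Finset.inter_union_distrib_left, hCsplit]
      have hAC'z : Disjoint (A ∩ C') B :=
        Finset.disjoint_sdiff.mono_left Finset.inter_subset_right
      rcases hdi with hd | hd
      · -- A ∩ C = A ∩ C'
        have hACeq : A ∩ C = A ∩ C' := by rw [hACsplit, hd, Finset.union_empty]
        show ∑ i ∈ A ∩ C, (y i + z i) ≤ (rkZ M (A ∩ C) : ℝ)
        rw [hACeq, Finset.sum_add_distrib, hzoff _ hAC'z, add_zero]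
        exact hinv A hA
      · -- B ⊆ A
        have hABeq : A ∩ B = B := Finset.inter_eq_right.mpr hd
        have hsplit2 : A ∩ C = (A ∩ C') ∪ B := by rw [hACsplit, hABeq]
        show ∑ i ∈ A ∩ C, (y i + z i) ≤ (rkZ M (A ∩ C) : ℝ)
        have e1 : ∑ i ∈ A ∩ C', (y i + z i) = ∑ i ∈ A ∩ C', y i := by
          rw [Finset.sum_add_distrib, hzoff _ hAC'z, add_zero]
        have e2 : ∑ i ∈ B, (y i + z i) = (δ : ℝ) := by
          rw [Finset.sum_add_distrib, hzB B (subset_refl B)]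
          have h0 : ∑ i ∈ B, y i = 0 :=
            Finset.sum_eq_zero (fun i hi => hsupp i (Finset.mem_sdiff.mp hi).2)
          rw [h0, zero_add]
        have hu : (A ∩ C) ∪ C' = C := by
          apply Finset.Subset.antisymm
          · exact Finset.union_subset Finset.inter_subset_right hC'sub
          · intro i hiC
            by_cases hiC' : i ∈ C'
            · exact Finset.mem_union_right _ hiC'
            · have hiB : i ∈ B := Finset.mem_sdiff.mpr ⟨hiC, hiC'⟩
              exact Finset.mem_union_left _ (Finset.mem_inter.mpr ⟨hd hiB, hiC⟩)
        have hi2 : (A ∩ C) ∩ C' = A ∩ C' := by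
          rw [Finset.inter_assoc, Finset.inter_eq_right.mpr hC'sub]
        have hsub2 := (submodZ M hACfin hC'fin).2.2
        rw [hu, hi2] at hsub2
        have hcast : ((rkZ M C : ℝ) + (rkZ M (A ∩ C') : ℝ))
            ≤ (rkZ M (A ∩ C) : ℝ) + (rkZ M C' : ℝ) := by exact_mod_cast hsub2
        have hy' := hinv A hA
        have hmain : ∑ i ∈ A ∩ C, (y i + z i) = ∑ i ∈ A ∩ C', y i + (δ : ℝ) := by
          rw [hsplit2, Finset.sum_union hAC'z, e1, e2]
        rw [hmain]
        push_cast [hδ]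
        linarith


lemma sum_linear {d : ℕ} (A : Finset (Fin d)) :
    IsLinearMap ℝ (fun y : Fin d → ℝ => ∑ i ∈ A, y i) := by
  constructor
  · intro x y; simp [Finset.sum_add_distrib]
  · intro r x; simp [Finset.mul_sum]

lemma sum_continuous {d : ℕ} (A : Finset (Fin d)) :
    Continuous (fun y : Fin d → ℝ => ∑ i ∈ A, y i) :=
  continuous_finset_sum _ (fun i _ => continuous_apply i)

lemma megaQ_decomp {d : ℕ} (M : Megamatroid d) :
    megaQ M = {y : Fin d → ℝ | ∑ i, y i = (rkZ M Finset.univ : ℝ)} ∩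
      ⋂ A : Finset (Fin d), {y : Fin d → ℝ | M.rk A ≠ ⊤ → ∑ i ∈ A, y i ≤ (rkZ M A : ℝ)} := by
  ext y
  rw [Set.mem_inter_iff, Set.mem_iInter, mem_megaQ_iff]
  simp only [Set.mem_setOf_eq]

lemma megaQ_closed {d : ℕ} (M : Megamatroid d) : IsClosed (megaQ M) := by
  rw [megaQ_decomp]
  apply IsClosed.inter
  · exact isClosed_eq (sum_continuous Finset.univ) continuous_const
  · apply isClosed_iInter
    intro A
    by_cases hA : M.rk A = ⊤
    · convert isClosed_univ
      ext y
      simp [hA]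
    · have : {y : Fin d → ℝ | M.rk A ≠ ⊤ → ∑ i ∈ A, y i ≤ (rkZ M A : ℝ)}
          = {y : Fin d → ℝ | ∑ i ∈ A, y i ≤ (rkZ M A : ℝ)} := by
        ext y; simp [hA]
      rw [this]
      exact isClosed_le (sum_continuous A) continuous_const

lemma megaQ_convex {d : ℕ} (M : Megamatroid d) : Convex ℝ (megaQ M) := by
  rw [megaQ_decomp]
  apply Convex.inter
  · exact convex_hyperplane (sum_linear Finset.univ) _
  · apply convex_iInter
    intro A
    by_cases hA : M.rk A = ⊤
    · have : {y : Fin d → ℝ | M.rk A ≠ ⊤ → ∑ i ∈ A, y i ≤ (rkZ M A : ℝ)} = Set.univ := by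
        ext y; simp [hA]
      rw [this]; exact convex_univ
    · have : {y : Fin d → ℝ | M.rk A ≠ ⊤ → ∑ i ∈ A, y i ≤ (rkZ M A : ℝ)}
          = {y : Fin d → ℝ | ∑ i ∈ A, y i ≤ (rkZ M A : ℝ)} := by
        ext y; simp [hA]
      rw [this]
      exact convex_halfSpace_le (sum_linear A) _


/-- Lemma `lemj_H`: containment in a closed halfspace `H` is valuative: if
`∑ m, a_m [Q(rk_m)] = 0` for megamatroids of common rank `r`, then
`∑_{m : Q(rk_m) ⊆ H} a_m = 0`. -/
theorem halfspace_valuative (d : ℕ) (r : ℤ) (c : Fin d → ℝ) (hc : c ≠ 0) (t : ℝ)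
    (n : ℕ) (M : Fin n → Megamatroid d)
    (hrank : ∀ m, (M m).rk Finset.univ = (r : WithTop ℤ))
    (a : Fin n → ℤ)
    (hzero : (∑ m, a m • indFn (megaQ (M m))) = 0) :
    (∑ m, if megaQ (M m) ⊆ {y : Fin d → ℝ | ∑ i, c i * y i ≤ t} then a m else 0) = 0 := by
  classical
  set H : Set (Fin d → ℝ) := {y : Fin d → ℝ | ∑ i, c i * y i ≤ t} with hH
  have hpt : ∀ x : Fin d → ℝ, ∑ m, a m * (megaQ (M m)).indicator (fun _ => (1:ℤ)) x = 0 := by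
    intro x
    have h0 := congrFun hzero x
    simpa [indFn, Finset.sum_apply, Pi.smul_apply, smul_eq_mul] using h0
  have hex : ∀ m, ∃ x, x ∈ megaQ (M m) ∧ (¬ megaQ (M m) ⊆ H → t < ∑ i, c i * x i) := by
    intro m
    by_cases hm : megaQ (M m) ⊆ H
    · obtain ⟨x, hx⟩ := megaQ_nonempty (M m)
      exact ⟨x, hx, fun h => absurd hm h⟩
    · obtain ⟨x, hx, hxH⟩ := Set.not_subset.mp hm
      exact ⟨x, hx, fun _ => not_le.mp hxH⟩
  choose w hw hwH using hex
  set R : ℝ := 1 + ∑ m, ‖w m‖ with hR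
  have hwR : ∀ m, w m ∈ Metric.closedBall (0 : Fin d → ℝ) R := by
    intro m
    rw [Metric.mem_closedBall, dist_zero_right]
    have h1 : ‖w m‖ ≤ ∑ m', ‖w m'‖ :=
      Finset.single_le_sum (fun i _ => norm_nonneg (w i)) (Finset.mem_univ m)
    rw [hR]; linarith
  set B : Set (Fin d → ℝ) := Metric.closedBall (0 : Fin d → ℝ) R with hBdef
  have happ : ∀ K : Set (Fin d → ℝ), Convex ℝ K → IsClosed K →
      ∑ m, (if ((megaQ (M m)) ∩ (K ∩ B)).Nonempty then a m else 0) = 0 := by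
    intro K hKc hKcl
    apply euler d n a (fun m => megaQ (M m) ∩ (K ∩ B))
    · intro m
      exact (megaQ_convex (M m)).inter (hKc.inter (convex_closedBall _ _))
    · intro m
      have hcl : IsClosed (megaQ (M m) ∩ K) := (megaQ_closed (M m)).inter hKcl
      have : megaQ (M m) ∩ (K ∩ B) = (megaQ (M m) ∩ K) ∩ B := by
        rw [Set.inter_assoc]
      rw [this]
      exact (isCompact_closedBall _ _).inter_left hcl
    · intro x
      by_cases hx : x ∈ K ∩ B
      · refine Eq.trans (Finset.sum_congr rfl ?_) (hpt x)
        intro m _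
        congr 1
        by_cases hq : x ∈ megaQ (M m)
        · have hmem : x ∈ megaQ (M m) ∩ (K ∩ B) := ⟨hq, hx⟩
          rw [Set.indicator_of_mem hmem, Set.indicator_of_mem hq]
        · have hmem : x ∉ megaQ (M m) ∩ (K ∩ B) := fun h => hq h.1
          rw [Set.indicator_of_notMem hmem, Set.indicator_of_notMem hq]
      · apply Finset.sum_eq_zero
        intro m _
        have hmem : x ∉ megaQ (M m) ∩ (K ∩ B) := fun h => hx h.2
        rw [Set.indicator_of_notMem hmem, mul_zero]
  have htot : ∑ m, a m = 0 := by
    have h1 := happ Set.univ convex_univ isClosed_univ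
    refine Eq.trans (Finset.sum_congr rfl ?_) h1
    intro m _
    have hne : ((megaQ (M m)) ∩ (Set.univ ∩ B)).Nonempty :=
      ⟨w m, hw m, Set.mem_univ _, hwR m⟩
    exact (if_pos hne).symm
  by_cases hG : ∃ m, ¬ megaQ (M m) ⊆ H
  · set G : Finset (Fin n) := Finset.univ.filter (fun m => ¬ megaQ (M m) ⊆ H) with hGdef
    have hGne : G.Nonempty := by
      obtain ⟨m, hm⟩ := hG
      exact ⟨m, Finset.mem_filter.mpr ⟨Finset.mem_univ m, hm⟩⟩
    have hfne : (G.image (fun m => ∑ i, c i * w m i)).Nonempty := hGne.image _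
    set s : ℝ := (G.image (fun m => ∑ i, c i * w m i)).min' hfne with hs
    have hst : t < s := by
      obtain ⟨m, hmG, hms⟩ := Finset.mem_image.mp ((G.image _).min'_mem hfne)
      have hm : ¬ megaQ (M m) ⊆ H := (Finset.mem_filter.mp hmG).2
      rw [hs, ← hms]
      exact hwH m hm
    have hsle : ∀ m, ¬ megaQ (M m) ⊆ H → s ≤ ∑ i, c i * w m i := by
      intro m hm
      exact Finset.min'_le _ _
        (Finset.mem_image_of_mem _ (Finset.mem_filter.mpr ⟨Finset.mem_univ m, hm⟩))
    set K : Set (Fin d → ℝ) := {y : Fin d → ℝ | s ≤ ∑ i, c i * y i} with hK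
    have hlin : IsLinearMap ℝ (fun y : Fin d → ℝ => ∑ i, c i * y i) := by
      constructor
      · intro x y; simp [mul_add, Finset.sum_add_distrib]
      · intro u x
        simp only [Pi.smul_apply, smul_eq_mul, Finset.mul_sum]
        exact Finset.sum_congr rfl (fun i _ => by ring)
    have hKconv : Convex ℝ K := convex_halfSpace_ge hlin s
    have hKcl : IsClosed K :=
      isClosed_le continuous_const (continuous_finset_sum _
        (fun i _ => continuous_const.mul (continuous_apply i)))
    have h1 := happ K hKconv hKcl
    have hiff : ∀ m, ((megaQ (M m)) ∩ (K ∩ B)).Nonempty ↔ ¬ megaQ (M m) ⊆ H := by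
      intro m
      constructor
      · rintro ⟨y, hyQ, hyK, -⟩ hsub
        have hyH : y ∈ H := hsub hyQ
        rw [hH, Set.mem_setOf_eq] at hyH
        rw [hK, Set.mem_setOf_eq] at hyK
        linarith
      · intro hm
        exact ⟨w m, hw m, hsle m hm, hwR m⟩
    have h1' : ∑ m, (if ¬ megaQ (M m) ⊆ H then a m else 0) = 0 := by
      refine Eq.trans (Finset.sum_congr rfl ?_) h1
      intro m _
      exact if_congr (hiff m).symm rfl rfl
    have hsplit : ∀ m, (if megaQ (M m) ⊆ H then a m else 0)
        = a m - (if ¬ megaQ (M m) ⊆ H then a m else 0) := by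
      intro m
      by_cases hm : megaQ (M m) ⊆ H <;> simp [hm]
    rw [Finset.sum_congr rfl (fun m _ => hsplit m), Finset.sum_sub_distrib, htot, h1',
      sub_zero]
  · push_neg at hG
    exact Eq.trans (Finset.sum_congr rfl (fun m _ => if_pos (hG m))) htot
end

section
/- Let d ≥ 1 and r ≥ 0, and let f be a valuative ℤ-valued function on the set of polymatroids of rank r on {1,…,d}. Then there exist integers c_{(X̲,r̲)}, indexed by the pairs (X̲,r̲) where X̲ is a maximal chain of length d in {1,…,d} and r̲ = (r_1,…,r_d) is an integer vector with 0 ≤ r_1 ≤ r_2 ≤ ⋯ ≤ r_d = r, such that for every polymatroid rk of rank r on {1,…,d}, f(rk) = Σ_{(X̲,r̲)} c_{(X̲,r̲)} · s_{X̲,r̲}(rk). -/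
open scoped BigOperators

attribute [local instance] Classical.propDecidable

/-- A polymatroid rank function of rank `r` on the ground set `{1,…,d}` (modeled as `Fin d`). -/
def IsPolymatroid (d r : ℕ) (rk : Finset (Fin d) → ℕ) : Prop :=
  rk ∅ = 0 ∧ (∀ A B : Finset (Fin d), A ⊆ B → rk A ≤ rk B) ∧
    (∀ A B : Finset (Fin d), rk (A ∪ B) + rk (A ∩ B) ≤ rk A + rk B) ∧
    rk Finset.univ = r

/-- A matroid rank function of rank `r` on `{1,…,d}`. -/
def IsMatroid (d r : ℕ) (rk : Finset (Fin d) → ℕ) : Prop :=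
  IsPolymatroid d r rk ∧ ∀ x : Fin d, rk {x} ≤ 1

/-- The base polytope `Q(rk)`. -/
def polyQ {d : ℕ} (rk : Finset (Fin d) → ℕ) : Set (Fin d → ℝ) :=
  {y | ∑ i, y i = (rk Finset.univ : ℝ) ∧
    ∀ A : Finset (Fin d), ∑ i ∈ A, y i ≤ (rk A : ℝ)}

/-- `P_M(d,r)`: the ℤ-module spanned by the indicator functions of base polytopes
of matroids of rank `r` on `{1,…,d}`. -/
def PMmod (d r : ℕ) : Submodule ℤ ((Fin d → ℝ) → ℤ) :=
  Submodule.span ℤ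
    {f | ∃ rk : Finset (Fin d) → ℕ, IsMatroid d r rk ∧ f = indFn (polyQ rk)}

/-- `P_PM(d,r)`: the ℤ-module spanned by the indicator functions of base polytopes
of polymatroids of rank `r` on `{1,…,d}`. -/
def PPMmod (d r : ℕ) : Submodule ℤ ((Fin d → ℝ) → ℤ) :=
  Submodule.span ℤ
    {f | ∃ rk : Finset (Fin d) → ℕ, IsPolymatroid d r rk ∧ f = indFn (polyQ rk)}

/-- An element of `𝔭_PM(d,r)`: a chain `∅ ⊂ X_1 ⊂ ⋯ ⊂ X_{len+1} = {1,…,d}` of length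
`len+1 ≤ d` together with integers `0 ≤ r_1 < ⋯ < r_{len+1} = r`. -/
structure PMPair (d r : ℕ) where
  len : ℕ
  hlen : len < d
  X : Fin (len + 1) → Finset (Fin d)
  rv : Fin (len + 1) → ℤ
  X_mono : StrictMono X
  X_zero : X 0 ≠ ∅
  X_last : X (Fin.last len) = Finset.univ
  rv_mono : StrictMono rv
  rv_zero : 0 ≤ rv 0
  rv_last : rv (Fin.last len) = (r : ℤ)

/-- An element of `𝔭_M(d,r)`: an element of `𝔭_PM(d,r)` additionally satisfying
`0 < |X_1|−r_1 < ⋯ < |X_{k−1}|−r_{k−1} ≤ |X_k|−r_k` (conditions vacuous when `k = 1`). -/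
structure MPair (d r : ℕ) extends PMPair d r where
  slack_pos : 1 ≤ len → 0 < ((X 0).card : ℤ) - rv 0
  slack_strict : ∀ i j : Fin (len + 1), i < j → (j : ℕ) < len →
    ((X i).card : ℤ) - rv i < ((X j).card : ℤ) - rv j
  slack_last : 1 ≤ len →
    ((X ⟨len - 1, by omega⟩).card : ℤ) - rv ⟨len - 1, by omega⟩ ≤
      ((X (Fin.last len)).card : ℤ) - rv (Fin.last len)

/-- The polytope `R_M(X̲,r̲)`. -/
def RMset {d r : ℕ} (p : MPair d r) : Set (Fin d → ℝ) :=
  {y | (∀ i, 0 ≤ y i ∧ y i ≤ 1) ∧ ∑ i, y i = (r : ℝ) ∧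
    ∀ j, ∑ i ∈ p.X j, y i ≤ (p.rv j : ℝ)}

/-- The polytope `R_PM(X̲,r̲)`. -/
def RPMset {d r : ℕ} (p : PMPair d r) : Set (Fin d → ℝ) :=
  {y | (∀ i, 0 ≤ y i) ∧ ∑ i, y i = (r : ℝ) ∧
    ∀ j, ∑ i ∈ p.X j, y i ≤ (p.rv j : ℝ)}

namespace DFPoly

variable {d r : ℕ}

/-- chains of nonempty proper subsets -/
def IsChain (c : Finset (Finset (Fin d))) : Prop :=
  (∀ S ∈ c, S ≠ ∅ ∧ S ⊂ Finset.univ) ∧ ∀ S ∈ c, ∀ T ∈ c, S ⊆ T ∨ T ⊆ S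

lemma inf_mem_chain {s : Finset (Finset (Fin d))}
    (hcomp : ∀ S ∈ s, ∀ T ∈ s, S ⊆ T ∨ T ⊆ S) (hne : s.Nonempty) :
    s.inf id ∈ s ∧ ∀ S ∈ s, s.inf id ⊆ S := by
  obtain ⟨M, hM, hMmin⟩ := Finset.exists_min_image s Finset.card hne
  have hlb : ∀ S ∈ s, M ⊆ S := by
    intro S hS
    rcases hcomp S hS M hM with h | h
    · exact (Finset.eq_of_subset_of_card_le h (hMmin S hS)).symm ▸ Finset.Subset.refl _
    · exact h
  have : s.inf id = M :=
    le_antisymm (Finset.inf_le hM) (Finset.le_inf hlb)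
  rw [this]
  exact ⟨hM, hlb⟩

/-- the smallest member of `insert univ c` containing `A` -/
noncomputable def minSup (c : Finset (Finset (Fin d))) (A : Finset (Fin d)) :
    Finset (Fin d) :=
  ((insert Finset.univ c).filter (fun S => A ⊆ S)).inf id

lemma chain_insert_comp {c : Finset (Finset (Fin d))} (hc : IsChain c) :
    ∀ S ∈ (insert Finset.univ c), ∀ T ∈ (insert Finset.univ c), S ⊆ T ∨ T ⊆ S := by
  intro S hS T hT
  rcases Finset.mem_insert.mp hS with h | h <;> rcases Finset.mem_insert.mp hT with h' | h'
  · left; rw [h, h']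
  · right; rw [h]; exact Finset.subset_univ T
  · left; rw [h']; exact Finset.subset_univ S
  · exact hc.2 S h T h'

lemma minSup_spec {c : Finset (Finset (Fin d))} (hc : IsChain c) (A : Finset (Fin d)) :
    minSup c A ∈ insert Finset.univ c ∧ A ⊆ minSup c A ∧
      ∀ S ∈ insert Finset.univ c, A ⊆ S → minSup c A ⊆ S := by
  have hne : ((insert Finset.univ c).filter (fun S => A ⊆ S)).Nonempty :=
    ⟨Finset.univ, by simp⟩
  have hcomp : ∀ S ∈ (insert Finset.univ c).filter (fun S => A ⊆ S),
      ∀ T ∈ (insert Finset.univ c).filter (fun S => A ⊆ S), S ⊆ T ∨ T ⊆ S := by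
    intro S hS T hT
    exact chain_insert_comp hc S (Finset.mem_filter.mp hS).1 T (Finset.mem_filter.mp hT).1
  obtain ⟨hmem, hlb⟩ := inf_mem_chain hcomp hne
  rw [Finset.mem_filter] at hmem
  refine ⟨hmem.1, hmem.2, ?_⟩
  intro S hS hAS
  exact hlb S (Finset.mem_filter.mpr ⟨hS, hAS⟩)

/-- The Schubert polymatroid associated to a chain and rank data. -/
noncomputable def sigma (c : Finset (Finset (Fin d))) (v : Finset (Fin d) → ℕ)
    (A : Finset (Fin d)) : ℕ :=
  if A = ∅ then 0 else v (minSup c A)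

lemma minSup_mono {c : Finset (Finset (Fin d))} (hc : IsChain c)
    {A B : Finset (Fin d)} (hAB : A ⊆ B) : minSup c A ⊆ minSup c B := by
  obtain ⟨hmemB, hsubB, -⟩ := minSup_spec hc B
  exact (minSup_spec hc A).2.2 _ hmemB (hAB.trans hsubB)

lemma minSup_univ {c : Finset (Finset (Fin d))} (hc : IsChain c) :
    minSup c Finset.univ = Finset.univ :=
  le_antisymm (Finset.subset_univ _) (minSup_spec hc Finset.univ).2.1

lemma minSup_self {c : Finset (Finset (Fin d))} (hc : IsChain c) {S : Finset (Fin d)}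
    (hS : S ∈ c) : minSup c S = S :=
  le_antisymm ((minSup_spec hc S).2.2 S (Finset.mem_insert_of_mem hS) Finset.Subset.rfl)
    (minSup_spec hc S).2.1

lemma sigma_poly {c : Finset (Finset (Fin d))} (hc : IsChain c)
    {rk : Finset (Fin d) → ℕ} (hrk : IsPolymatroid d r rk) :
    IsPolymatroid d r (sigma c rk) := by
  obtain ⟨hrk0, hrkmono, hrksub, hrkuniv⟩ := hrk
  refine ⟨by simp [sigma], ?_, ?_, ?_⟩
  · intro A B hAB
    by_cases hA : A = ∅
    · simp [sigma, hA]
    · have hB : B ≠ ∅ := fun h => hA (Finset.subset_empty.mp (h ▸ hAB))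
      simp only [sigma, if_neg hA, if_neg hB]
      exact hrkmono _ _ (minSup_mono hc hAB)
  · intro A B
    by_cases hA : A = ∅
    · simp [sigma, hA]
    by_cases hB : B = ∅
    · simp [sigma, hB]
    have hAB : A ∪ B ≠ ∅ := fun h => hA (Finset.subset_empty.mp (h ▸ Finset.subset_union_left))
    have hint : sigma c rk (A ∩ B) ≤ min (sigma c rk A) (sigma c rk B) := by
      rcases eq_or_ne (A ∩ B) ∅ with h | h
      · simp [sigma, h]
      · simp only [sigma, if_neg h, if_neg hA, if_neg hB, le_min_iff]
        exact ⟨hrkmono _ _ (minSup_mono hc Finset.inter_subset_left),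
          hrkmono _ _ (minSup_mono hc Finset.inter_subset_right)⟩
    have hun : sigma c rk (A ∪ B) ≤ max (sigma c rk A) (sigma c rk B) := by
      simp only [sigma, if_neg hA, if_neg hB, if_neg hAB]
      obtain ⟨hmA, hsA, hlA⟩ := minSup_spec hc A
      obtain ⟨hmB, hsB, hlB⟩ := minSup_spec hc B
      rcases chain_insert_comp hc _ hmA _ hmB with h | h
      · have : minSup c (A ∪ B) ⊆ minSup c B :=
          (minSup_spec hc (A ∪ B)).2.2 _ hmB (Finset.union_subset (hsA.trans h) hsB)
        exact le_max_of_le_right (hrkmono _ _ this)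
      · have : minSup c (A ∪ B) ⊆ minSup c A :=
          (minSup_spec hc (A ∪ B)).2.2 _ hmA (Finset.union_subset hsA (hsB.trans h))
        exact le_max_of_le_left (hrkmono _ _ this)
    have := add_le_add hun hint
    refine this.trans ?_
    rcases max_cases (sigma c rk A) (sigma c rk B) with ⟨h1, h2⟩ | ⟨h1, h2⟩ <;>
      rcases min_cases (sigma c rk A) (sigma c rk B) with ⟨h3, h4⟩ | ⟨h3, h4⟩ <;>
      omega
  · by_cases hu : (Finset.univ : Finset (Fin d)) = ∅
    · simp only [sigma, if_pos hu]
      rw [hu] at hrkuniv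
      omega
    · simp only [sigma, if_neg hu, minSup_univ hc]
      exact hrkuniv

lemma polyQ_nonneg {rk : Finset (Fin d) → ℕ} (hrk : IsPolymatroid d r rk)
    {y : Fin d → ℝ} (hy : y ∈ polyQ rk) (i : Fin d) : 0 ≤ y i := by
  obtain ⟨hsum, hle⟩ := hy
  have h1 := Finset.sum_erase_add Finset.univ y (Finset.mem_univ i)
  have h2 := hle (Finset.univ.erase i)
  have h3 : (rk (Finset.univ.erase i) : ℝ) ≤ (rk Finset.univ : ℝ) := by
    exact_mod_cast hrk.2.1 _ _ (Finset.erase_subset _ _)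
  linarith

lemma mem_polyQ_sigma {c : Finset (Finset (Fin d))} (hc : IsChain c)
    {rk : Finset (Fin d) → ℕ} (hrk : IsPolymatroid d r rk) (y : Fin d → ℝ) :
    y ∈ polyQ (sigma c rk) ↔
      (∑ i, y i = (r : ℝ) ∧ (∀ i, 0 ≤ y i) ∧
        ∀ S ∈ c, ∑ i ∈ S, y i ≤ (rk S : ℝ)) := by
  have hpoly := sigma_poly hc hrk
  have huniv : sigma c rk Finset.univ = r := hpoly.2.2.2
  constructor
  · intro hy
    obtain ⟨hsum, hle⟩ := hy
    refine ⟨by rw [← huniv]; exact_mod_cast hsum, polyQ_nonneg hpoly ⟨hsum, hle⟩, ?_⟩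
    intro S hS
    have h1 := hle S
    have hSne : S ≠ ∅ := (hc.1 S hS).1
    rw [sigma, if_neg hSne, minSup_self hc hS] at h1
    exact h1
  · rintro ⟨hsum, hpos, hle⟩
    refine ⟨by rw [huniv]; exact_mod_cast hsum, ?_⟩
    intro A
    by_cases hA : A = ∅
    · simp [hA, sigma]
    rw [sigma, if_neg hA]
    obtain ⟨hmem, hsub, -⟩ := minSup_spec hc A
    have h1 : ∑ i ∈ A, y i ≤ ∑ i ∈ minSup c A, y i :=
      Finset.sum_le_sum_of_subset_of_nonneg hsub (fun i _ _ => hpos i)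
    rcases Finset.mem_insert.mp hmem with h | h
    · rw [h]
      rw [h] at h1
      rw [hrk.2.2.2]
      linarith [hsum ▸ h1]
    · exact h1.trans (hle _ h)

lemma mem_polyQ_iff {rk : Finset (Fin d) → ℕ} (hrk : IsPolymatroid d r rk)
    (y : Fin d → ℝ) (hsum : ∑ i, y i = (r : ℝ)) :
    y ∈ polyQ rk ↔ ∀ A : Finset (Fin d), A ≠ ∅ → A ⊂ Finset.univ →
      ∑ i ∈ A, y i ≤ (rk A : ℝ) := by
  constructor
  · intro hy A _ _
    exact hy.2 A
  · intro h
    refine ⟨by rw [hrk.2.2.2]; exact_mod_cast hsum, ?_⟩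
    intro A
    by_cases hA : A = ∅
    · simp [hA, hrk.1]
    rcases eq_or_ne A Finset.univ with h' | h'
    · rw [h', hrk.2.2.2, hsum]
    · exact h A hA (Finset.ssubset_iff_subset_ne.mpr ⟨Finset.subset_univ A, h'⟩)

end DFPoly

namespace DFCore

variable {d : ℕ}

/-- the set of chains of `e`-good, nonempty, strictly-below-`B` subsets. -/
noncomputable def chainsIn (e : Finset (Fin d) → ℝ) (B : Finset (Fin d)) :
    Finset (Finset (Finset (Fin d))) :=
  Finset.univ.filter (fun c =>
    (∀ S ∈ c, e S ≤ 0 ∧ S ≠ ∅ ∧ S ⊂ B) ∧ ∀ S ∈ c, ∀ T ∈ c, S ⊆ T ∨ T ⊆ S)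

lemma sup_mem_chain {c : Finset (Finset (Fin d))}
    (hcomp : ∀ S ∈ c, ∀ T ∈ c, S ⊆ T ∨ T ⊆ S) (hne : c.Nonempty) :
    c.sup id ∈ c ∧ ∀ S ∈ c, S ⊆ c.sup id := by
  obtain ⟨M, hM, hMmax⟩ := Finset.exists_max_image c Finset.card hne
  have hub : ∀ S ∈ c, S ⊆ M := by
    intro S hS
    rcases hcomp S hS M hM with h | h
    · exact h
    · exact (Finset.eq_of_subset_of_card_le h (hMmax S hS)).symm ▸ Finset.Subset.refl _
  have : c.sup id = M := le_antisymm (Finset.sup_le hub) (Finset.le_sup (f := id) hM)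
  rw [this]
  exact ⟨hM, hub⟩

lemma ideal_sum_zero {J : Finset (Finset (Fin d))} {x : Fin d}
    (hins : ∀ E ∈ J, x ∉ E → insert x E ∈ J)
    (hera : ∀ E ∈ J, x ∈ E → E.erase x ∈ J) :
    ∑ Y ∈ J, (-1 : ℤ) ^ Y.card = 0 := by
  classical
  have hsplit : J = J.filter (fun Y => x ∈ Y) ∪ J.filter (fun Y => x ∉ Y) := by
    ext Y; simp [Finset.mem_filter, Finset.mem_union]; tauto
  have hdisj : Disjoint (J.filter (fun Y => x ∈ Y)) (J.filter (fun Y => x ∉ Y)) := by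
    simp [Finset.disjoint_filter]
  rw [hsplit, Finset.sum_union hdisj]
  have hbij : ∑ Y ∈ J.filter (fun Y => x ∈ Y), (-1 : ℤ) ^ Y.card
      = ∑ Y ∈ J.filter (fun Y => x ∉ Y), (-1 : ℤ) ^ (Y.card + 1) := by
    apply Finset.sum_nbij' (fun Y => Y.erase x) (fun Y => insert x Y)
    · intro Y hY
      simp only [Finset.mem_filter] at hY ⊢
      exact ⟨hera Y hY.1 hY.2, Finset.notMem_erase _ _⟩
    · intro Y hY
      simp only [Finset.mem_filter] at hY ⊢
      exact ⟨hins Y hY.1 hY.2, Finset.mem_insert_self _ _⟩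
    · intro Y hY
      simp only [Finset.mem_filter] at hY
      exact Finset.insert_erase hY.2
    · intro Y hY
      simp only [Finset.mem_filter] at hY
      exact Finset.erase_insert hY.2
    · intro Y hY
      simp only [Finset.mem_filter] at hY
      rw [Finset.card_erase_of_mem hY.2]
      have : Y.card ≠ 0 := Finset.card_ne_zero_of_mem hY.2
      have h1 : Y.card - 1 + 1 = Y.card := by omega
      rw [h1]
  rw [hbij]
  have : ∀ Y ∈ J.filter (fun Y => x ∉ Y), (-1 : ℤ) ^ (Y.card + 1) = -(-1 : ℤ) ^ Y.card := by
    intro Y _; rw [pow_succ]; ring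
  rw [Finset.sum_congr rfl this, Finset.sum_neg_distrib]
  ring

theorem chain_sum (e : Finset (Fin d) → ℝ)
    (hsup : ∀ A B : Finset (Fin d), e A + e B ≤ e (A ∪ B) + e (A ∩ B))
    (he0 : e ∅ = 0) :
    ∀ B : Finset (Fin d), B ≠ ∅ → e B ≤ 0 →
    ∑ c ∈ chainsIn e B, (-1 : ℤ) ^ c.card =
      if (∀ A : Finset (Fin d), A ≠ ∅ → A ⊂ B → e A ≤ 0) then (-1) ^ (B.card + 1) else 0 := by
  intro B
  induction B using Finset.strongInduction with
  | _ B IH =>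

  intro hBne heB
  have hemem : (∅ : Finset (Finset (Fin d))) ∈ chainsIn e B := by
    simp [chainsIn]
  rw [← Finset.sum_erase_add _ _ hemem]
  have hb : ∑ c ∈ (chainsIn e B).erase ∅, (-1 : ℤ) ^ c.card
      = ∑ Y ∈ Finset.univ.filter
          (fun Y : Finset (Fin d) => e Y ≤ 0 ∧ Y ≠ ∅ ∧ Y ⊂ B),
          ∑ c' ∈ chainsIn e Y, (-1 : ℤ) ^ (c'.card + 1) := by
    rw [← Finset.sum_finset_product
      (((Finset.univ.filter
          (fun Y : Finset (Fin d) => e Y ≤ 0 ∧ Y ≠ ∅ ∧ Y ⊂ B)) ×ˢ Finset.univ).filter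
        (fun x => x.2 ∈ chainsIn e x.1))
      (Finset.univ.filter (fun Y : Finset (Fin d) => e Y ≤ 0 ∧ Y ≠ ∅ ∧ Y ⊂ B))
      (fun Y => chainsIn e Y)
      (by
        intro p
        simp only [Finset.mem_filter, Finset.mem_product, Finset.mem_univ, true_and,
          and_true] <;> tauto)
      (f := fun x : Finset (Fin d) × Finset (Finset (Fin d)) =>
        (-1 : ℤ) ^ (x.2.card + 1))]
    apply Finset.sum_nbij' (fun c => (c.sup id, c.erase (c.sup id)))
      (fun x => insert x.1 x.2)
    · intro c hc
      rw [Finset.mem_erase] at hc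
      obtain ⟨hcne, hcmem⟩ := hc
      rw [chainsIn, Finset.mem_filter] at hcmem
      obtain ⟨-, hgood, hcomp⟩ := hcmem
      obtain ⟨hsupmem, hub⟩ := sup_mem_chain hcomp (Finset.nonempty_of_ne_empty hcne)
      rw [Finset.mem_filter, Finset.mem_product]
      refine ⟨⟨Finset.mem_filter.mpr ⟨Finset.mem_univ _, hgood _ hsupmem⟩,
        Finset.mem_univ _⟩, ?_⟩
      rw [chainsIn, Finset.mem_filter]
      refine ⟨Finset.mem_univ _, ?_, ?_⟩
      · intro S hS
        rw [Finset.mem_erase] at hS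
        refine ⟨(hgood S hS.2).1, (hgood S hS.2).2.1, ?_⟩
        exact Finset.ssubset_iff_subset_ne.mpr ⟨hub S hS.2, hS.1⟩
      · intro S hS T hT
        rw [Finset.mem_erase] at hS hT
        exact hcomp S hS.2 T hT.2
    · intro x hx
      rw [Finset.mem_filter, Finset.mem_product] at hx
      obtain ⟨⟨hY, -⟩, hc'⟩ := hx
      rw [Finset.mem_filter] at hY
      obtain ⟨-, hY⟩ := hY
      rw [chainsIn, Finset.mem_filter] at hc'
      obtain ⟨-, hgood', hcomp'⟩ := hc'
      rw [Finset.mem_erase]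
      refine ⟨Finset.insert_ne_empty _ _, ?_⟩
      rw [chainsIn, Finset.mem_filter]
      refine ⟨Finset.mem_univ _, ?_, ?_⟩
      · intro S hS
        rcases Finset.mem_insert.mp hS with h | h
        · rw [h]; exact hY
        · exact ⟨(hgood' S h).1, (hgood' S h).2.1, (hgood' S h).2.2.trans hY.2.2⟩
      · intro S hS T hT
        rcases Finset.mem_insert.mp hS with h | h <;>
          rcases Finset.mem_insert.mp hT with h' | h'
        · left; rw [h, h']
        · right; rw [h]; exact ((hgood' T h').2.2).subset
        · left; rw [h']; exact ((hgood' S h).2.2).subset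
        · exact hcomp' S h T h'
    · intro c hc
      rw [Finset.mem_erase] at hc
      obtain ⟨hcne, hcmem⟩ := hc
      rw [chainsIn, Finset.mem_filter] at hcmem
      obtain ⟨-, hgood, hcomp⟩ := hcmem
      obtain ⟨hsupmem, -⟩ := sup_mem_chain hcomp (Finset.nonempty_of_ne_empty hcne)
      exact Finset.insert_erase hsupmem
    · intro x hx
      rw [Finset.mem_filter, Finset.mem_product] at hx
      obtain ⟨⟨-, -⟩, hc'⟩ := hx
      rw [chainsIn, Finset.mem_filter] at hc'
      obtain ⟨-, hgood', hcomp'⟩ := hc'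
      have hYnot : x.1 ∉ x.2 := fun hmem => ssubset_irrefl _ ((hgood' x.1 hmem).2.2)
      have hsupeq : (insert x.1 x.2).sup id = x.1 := by
        rw [Finset.sup_insert]
        exact sup_eq_left.mpr (Finset.sup_le (fun S hS => ((hgood' S hS).2.2).subset))
      have h2 : (insert x.1 x.2).erase ((insert x.1 x.2).sup id) = x.2 := by
        rw [hsupeq, Finset.erase_insert hYnot]
      rw [Prod.ext_iff]
      exact ⟨hsupeq, h2⟩
    · intro c hc
      rw [Finset.mem_erase] at hc
      obtain ⟨hcne, hcmem⟩ := hc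
      rw [chainsIn, Finset.mem_filter] at hcmem
      obtain ⟨-, hgood, hcomp⟩ := hcmem
      obtain ⟨hsupmem, -⟩ := sup_mem_chain hcomp (Finset.nonempty_of_ne_empty hcne)
      rw [Finset.card_erase_of_mem hsupmem]
      have : c.card ≠ 0 := Finset.card_ne_zero_of_mem hsupmem
      congr 1
      omega
  rw [hb]
  have hc : ∀ Y ∈ (Finset.univ.filter
      (fun Y : Finset (Fin d) => e Y ≤ 0 ∧ Y ≠ ∅ ∧ Y ⊂ B)),
      ∑ c' ∈ chainsIn e Y, (-1 : ℤ) ^ (c'.card + 1)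
      = if (∀ A : Finset (Fin d), A ≠ ∅ → A ⊂ Y → e A ≤ 0)
          then (-1) ^ Y.card else 0 := by
    intro Y hY
    rw [Finset.mem_filter] at hY
    obtain ⟨-, heY, hYne, hYss⟩ := hY
    have : ∑ c' ∈ chainsIn e Y, (-1 : ℤ) ^ (c'.card + 1)
        = -∑ c' ∈ chainsIn e Y, (-1 : ℤ) ^ c'.card := by
      rw [← Finset.sum_neg_distrib]
      apply Finset.sum_congr rfl
      intro c' _
      rw [pow_succ]; ring
    rw [this, IH Y hYss hYne heY]
    split_ifs
    · rw [pow_succ]; ring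
    · ring
  rw [Finset.sum_congr rfl hc]
  simp only [Finset.card_empty, pow_zero]
  -- rewrite as a sum over the hereditary ideal (minus B)
  have hJ : ∑ Y ∈ (Finset.univ.filter (fun Y : Finset (Fin d) =>
        (Y ⊆ B ∧ ∀ A : Finset (Fin d), A ≠ ∅ → A ⊆ Y → e A ≤ 0) ∧ Y ≠ B)),
        (-1 : ℤ) ^ Y.card
      = ∑ Y ∈ (Finset.univ.filter
          (fun Y : Finset (Fin d) => e Y ≤ 0 ∧ Y ≠ ∅ ∧ Y ⊂ B)),
          (if (∀ A : Finset (Fin d), A ≠ ∅ → A ⊂ Y → e A ≤ 0)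
            then ((-1 : ℤ)) ^ Y.card else 0) + 1 := by
    have hemem' : (∅ : Finset (Fin d)) ∈ (Finset.univ.filter (fun Y : Finset (Fin d) =>
        (Y ⊆ B ∧ ∀ A : Finset (Fin d), A ≠ ∅ → A ⊆ Y → e A ≤ 0) ∧ Y ≠ B)) := by
      rw [Finset.mem_filter]
      refine ⟨Finset.mem_univ _, ⟨Finset.empty_subset _, ?_⟩, Ne.symm hBne⟩
      intro A hAne hAY
      exact absurd (Finset.subset_empty.mp hAY) hAne
    rw [← Finset.sum_erase_add _ _ hemem']
    congr 1
    · have hset : ((Finset.univ.filter (fun Y : Finset (Fin d) =>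
          (Y ⊆ B ∧ ∀ A : Finset (Fin d), A ≠ ∅ → A ⊆ Y → e A ≤ 0) ∧ Y ≠ B))).erase ∅
          = (Finset.univ.filter
              (fun Y : Finset (Fin d) => e Y ≤ 0 ∧ Y ≠ ∅ ∧ Y ⊂ B)).filter
              (fun Y => ∀ A : Finset (Fin d), A ≠ ∅ → A ⊂ Y → e A ≤ 0) := by
        ext Y
        simp only [Finset.mem_erase, Finset.mem_filter, Finset.mem_univ, true_and]
        constructor
        · rintro ⟨hYe, ⟨hsub, hher⟩, hYB⟩
          refine ⟨⟨hher Y hYe Finset.Subset.rfl, hYe,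
            Finset.ssubset_iff_subset_ne.mpr ⟨hsub, hYB⟩⟩, ?_⟩
          intro A hAne hAY
          exact hher A hAne hAY.subset
        · rintro ⟨⟨heY, hYne, hYss⟩, hher⟩
          refine ⟨hYne, ⟨hYss.subset, ?_⟩, hYss.ne⟩
          intro A hAne hAY
          rcases eq_or_ne A Y with h | h
          · rw [h]; exact heY
          · exact hher A hAne (Finset.ssubset_iff_subset_ne.mpr ⟨hAY, h⟩)
      rw [hset, Finset.sum_filter]
  rw [← hJ]
  by_cases hher : ∀ A : Finset (Fin d), A ≠ ∅ → A ⊂ B → e A ≤ 0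
  · rw [if_pos hher]
    have hJfull : (Finset.univ.filter (fun Y : Finset (Fin d) =>
        (Y ⊆ B ∧ ∀ A : Finset (Fin d), A ≠ ∅ → A ⊆ Y → e A ≤ 0) ∧ Y ≠ B))
        = B.powerset.erase B := by
      ext Y
      simp only [Finset.mem_filter, Finset.mem_univ, true_and, Finset.mem_powerset,
        Finset.mem_erase]
      constructor
      · rintro ⟨⟨hsub, -⟩, hYB⟩
        exact ⟨hYB, hsub⟩
      · rintro ⟨hYB, hsub⟩
        refine ⟨⟨hsub, ?_⟩, hYB⟩
        intro A hAne hAY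
        rcases eq_or_ne A B with h | h
        · rw [h]; exact heB
        · exact hher A hAne (Finset.ssubset_iff_subset_ne.mpr ⟨hAY.trans hsub, h⟩)
    rw [hJfull]
    have hBmem : B ∈ B.powerset := Finset.mem_powerset_self B
    have h6 := Finset.sum_erase_add B.powerset (fun Y => (-1 : ℤ) ^ Y.card) hBmem
    rw [Finset.sum_powerset_neg_one_pow_card, if_neg hBne] at h6
    rw [pow_succ]
    linarith
  · rw [if_neg hher]
    push_neg at hher
    obtain ⟨A0, hA0ne, hA0ss, hA0bad⟩ := hher
    have hJeq : (Finset.univ.filter (fun Y : Finset (Fin d) =>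
        (Y ⊆ B ∧ ∀ A : Finset (Fin d), A ≠ ∅ → A ⊆ Y → e A ≤ 0) ∧ Y ≠ B))
        = Finset.univ.filter (fun Y : Finset (Fin d) =>
          Y ⊆ B ∧ ∀ A : Finset (Fin d), A ≠ ∅ → A ⊆ Y → e A ≤ 0) := by
      ext Y
      simp only [Finset.mem_filter, Finset.mem_univ, true_and]
      constructor
      · exact fun h => h.1
      · intro h
        refine ⟨h, ?_⟩
        rintro rfl
        exact absurd (h.2 A0 hA0ne.ne_empty hA0ss.subset) (not_le.mpr hA0bad)
    rw [hJeq]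
    obtain ⟨M, hMp, hMmax⟩ := Finset.exists_max_image B.powerset e
      ⟨∅, Finset.empty_mem_powerset B⟩
    rw [Finset.mem_powerset] at hMp
    have heM : 0 < e M :=
      lt_of_lt_of_le hA0bad (hMmax A0 (Finset.mem_powerset.mpr hA0ss.subset))
    have hMB : M ⊂ B :=
      Finset.ssubset_iff_subset_ne.mpr ⟨hMp, fun h => absurd (h ▸ heB) (not_le.mpr heM)⟩
    obtain ⟨x, hxB, hxM⟩ := Finset.exists_of_ssubset hMB
    have key : ∀ E : Finset (Fin d), E ⊆ B →
        (∀ A : Finset (Fin d), A ≠ ∅ → A ⊆ E → e A ≤ 0) → e (insert x E) ≤ 0 := by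
      intro E hEB hEher
      have h1 := hsup M (insert x E)
      have h2 : M ∪ insert x E ⊆ B := Finset.union_subset hMp (Finset.insert_subset hxB hEB)
      have h3 : e (M ∪ insert x E) ≤ e M := hMmax _ (Finset.mem_powerset.mpr h2)
      have h4 : M ∩ insert x E = M ∩ E := by
        rw [Finset.inter_comm, Finset.insert_inter_of_notMem hxM, Finset.inter_comm]
      have h5 : e (M ∩ E) ≤ 0 := by
        by_cases hie : M ∩ E = ∅
        · rw [hie, he0]
        · exact hEher _ hie Finset.inter_subset_right
      rw [h4] at h1
      linarith
    apply ideal_sum_zero (x := x)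
    · intro E hE hxE
      rw [Finset.mem_filter] at hE ⊢
      obtain ⟨-, hEB, hEher⟩ := hE
      refine ⟨Finset.mem_univ _, Finset.insert_subset hxB hEB, ?_⟩
      intro A hAne hAsub
      by_cases hxA : x ∈ A
      · have hAerase : A.erase x ⊆ E := by
          intro a ha
          rw [Finset.mem_erase] at ha
          rcases Finset.mem_insert.mp (hAsub ha.2) with h | h
          · exact absurd h ha.1
          · exact h
        have hArw : A = insert x (A.erase x) := (Finset.insert_erase hxA).symm
        rw [hArw]
        apply key (A.erase x) (hAerase.trans hEB)
        intro A' hA'ne hA'sub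
        exact hEher A' hA'ne (hA'sub.trans hAerase)
      · have : A ⊆ E := by
          intro a ha
          rcases Finset.mem_insert.mp (hAsub ha) with h | h
          · exact absurd (h ▸ ha) hxA
          · exact h
        exact hEher A hAne this
    · intro E hE hxE
      rw [Finset.mem_filter] at hE ⊢
      obtain ⟨-, hEB, hEher⟩ := hE
      refine ⟨Finset.mem_univ _, (Finset.erase_subset _ _).trans hEB, ?_⟩
      intro A hAne hAsub
      exact hEher A hAne (hAsub.trans (Finset.erase_subset _ _))

end DFCore

namespace DFMain
open DFPoly

variable {d r : ℕ}

/-- all chains of nonempty proper subsets -/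
noncomputable def chainFinset (d : ℕ) : Finset (Finset (Finset (Fin d))) :=
  Finset.univ.filter DFPoly.IsChain

theorem pointwise (hd : 0 < d) {rk : Finset (Fin d) → ℕ}
    (hrk : IsPolymatroid d r rk) (y : Fin d → ℝ) :
    ∑ c ∈ chainFinset d, (-1 : ℤ) ^ (d - 1 + c.card) * indFn (polyQ (DFPoly.sigma c rk)) y
      = indFn (polyQ rk) y := by
  have huniv_ne : (Finset.univ : Finset (Fin d)) ≠ ∅ := by
    simp [← Finset.card_eq_zero, Finset.card_univ]
    omega
  by_cases hsum : ∑ i, y i = (r : ℝ)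
  swap
  · -- all indicators vanish
    have hrkind : indFn (polyQ rk) y = 0 := by
      rw [indFn, Set.indicator_apply, if_neg]
      intro hy
      exact hsum (by rw [← hrk.2.2.2]; exact_mod_cast hy.1)
    rw [hrkind]
    apply Finset.sum_eq_zero
    intro c hc
    have hc' : DFPoly.IsChain c := (Finset.mem_filter.mp hc).2
    have : indFn (polyQ (DFPoly.sigma c rk)) y = 0 := by
      rw [indFn, Set.indicator_apply, if_neg]
      intro hy
      exact hsum ((mem_polyQ_sigma hc' hrk y).mp hy).1
    rw [this, mul_zero]
  by_cases hpos : ∀ i, 0 ≤ y i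
  swap
  · push_neg at hpos
    obtain ⟨i0, hi0⟩ := hpos
    have hrkind : indFn (polyQ rk) y = 0 := by
      rw [indFn, Set.indicator_apply, if_neg]
      intro hy
      exact absurd (polyQ_nonneg hrk hy i0) (not_le.mpr hi0)
    rw [hrkind]
    apply Finset.sum_eq_zero
    intro c hc
    have hc' : DFPoly.IsChain c := (Finset.mem_filter.mp hc).2
    have : indFn (polyQ (DFPoly.sigma c rk)) y = 0 := by
      rw [indFn, Set.indicator_apply, if_neg]
      intro hy
      exact absurd (((mem_polyQ_sigma hc' hrk y).mp hy).2.1 i0) (not_le.mpr hi0)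
    rw [this, mul_zero]
  -- main case
  set e : Finset (Fin d) → ℝ := fun A => (∑ i ∈ A, y i) - (rk A : ℝ) with he
  have hsup : ∀ A B : Finset (Fin d), e A + e B ≤ e (A ∪ B) + e (A ∩ B) := by
    intro A B
    have h1 : ∑ i ∈ A ∪ B, y i + ∑ i ∈ A ∩ B, y i = ∑ i ∈ A, y i + ∑ i ∈ B, y i :=
      Finset.sum_union_inter
    have h2 : (rk (A ∪ B) : ℝ) + (rk (A ∩ B) : ℝ) ≤ (rk A : ℝ) + (rk B : ℝ) := by
      exact_mod_cast hrk.2.2.1 A B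
    simp only [he]
    linarith
  have he0 : e ∅ = 0 := by simp [he, hrk.1]
  have heuniv : e Finset.univ ≤ 0 := by
    simp only [he, hrk.2.2.2, hsum]
    simp
  have hind : ∀ c ∈ chainFinset d, indFn (polyQ (DFPoly.sigma c rk)) y
      = if (∀ S ∈ c, e S ≤ 0) then 1 else 0 := by
    intro c hc
    have hc' : DFPoly.IsChain c := (Finset.mem_filter.mp hc).2
    rw [indFn, Set.indicator_apply]
    split_ifs with h1 h2 h2
    · rfl
    · exfalso
      apply h2
      intro S hS
      have := ((mem_polyQ_sigma hc' hrk y).mp h1).2.2 S hS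
      simp only [he]
      linarith
    · exfalso
      apply h1
      rw [mem_polyQ_sigma hc' hrk y]
      refine ⟨hsum, hpos, ?_⟩
      intro S hS
      have := h2 S hS
      simp only [he] at this
      linarith
    · rfl
  rw [Finset.sum_congr rfl (fun c hc => by rw [hind c hc])]
  have hfilt : ∑ c ∈ chainFinset d,
      (-1 : ℤ) ^ (d - 1 + c.card) * (if (∀ S ∈ c, e S ≤ 0) then 1 else 0)
      = ∑ c ∈ DFCore.chainsIn e Finset.univ, (-1 : ℤ) ^ (d - 1 + c.card) := by
    have hif : ∀ c : Finset (Finset (Fin d)),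
        (-1 : ℤ) ^ (d - 1 + c.card) * (if (∀ S ∈ c, e S ≤ 0) then 1 else 0)
        = if (∀ S ∈ c, e S ≤ 0) then (-1 : ℤ) ^ (d - 1 + c.card) else 0 := by
      intro c; split_ifs <;> ring
    rw [Finset.sum_congr rfl (fun c _ => hif c), ← Finset.sum_filter]
    apply Finset.sum_congr
    · ext c
      simp only [Finset.mem_filter, chainFinset, DFCore.chainsIn, Finset.mem_univ,
        true_and, DFPoly.IsChain]
      constructor
      · rintro ⟨⟨hgood, hcomp⟩, hle⟩
        exact ⟨fun S hS => ⟨hle S hS, (hgood S hS).1, (hgood S hS).2⟩, hcomp⟩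
      · rintro ⟨hgood, hcomp⟩
        exact ⟨⟨fun S hS => ⟨(hgood S hS).2.1, (hgood S hS).2.2⟩, hcomp⟩,
          fun S hS => (hgood S hS).1⟩
    · intro c _
      rfl
  rw [hfilt]
  have hpow : ∀ c : Finset (Finset (Fin d)), (-1 : ℤ) ^ (d - 1 + c.card)
      = (-1 : ℤ) ^ (d - 1) * (-1 : ℤ) ^ c.card := fun c => pow_add _ _ _
  rw [Finset.sum_congr rfl (fun c _ => hpow c), ← Finset.mul_sum]
  rw [DFCore.chain_sum e hsup he0 Finset.univ huniv_ne heuniv]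
  rw [indFn, Set.indicator_apply]
  have hmem : y ∈ polyQ rk ↔ (∀ A : Finset (Fin d), A ≠ ∅ → A ⊂ Finset.univ → e A ≤ 0) := by
    rw [mem_polyQ_iff hrk y hsum]
    constructor
    · intro h A h1 h2
      have := h A h1 h2
      simp only [he]
      linarith
    · intro h A h1 h2
      have := h A h1 h2
      simp only [he] at this
      linarith
  split_ifs with h1 h2 h2
  · rw [Finset.card_univ, Fintype.card_fin]
    rw [← pow_add]
    have : d - 1 + (d + 1) = 2 * d := by omega
    rw [this, pow_mul]
    norm_num
  · exact absurd (hmem.mpr h1) h2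
  · exact absurd (hmem.mp h2) h1
  · rw [mul_zero]

theorem keyE (d r : ℕ) (hd : 1 ≤ d) (f : (Finset (Fin d) → ℕ) → ℤ)
    (hval : ∀ (n : ℕ) (rks : Fin n → Finset (Fin d) → ℕ) (a : Fin n → ℤ),
      (∀ m, IsPolymatroid d r (rks m)) →
      (∑ m, a m • indFn (polyQ (rks m))) = 0 →
      (∑ m, a m * f (rks m)) = 0)
    (rk : Finset (Fin d) → ℕ) (hrk : IsPolymatroid d r rk) :
    f rk = ∑ c ∈ chainFinset d,
      (-1 : ℤ) ^ (d - 1 + c.card) * f (DFPoly.sigma c rk) := by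
  classical
  set s := chainFinset d with hs
  set N := s.card with hN
  set E := s.equivFin with hE
  set rks : Fin (N + 1) → Finset (Fin d) → ℕ :=
    Fin.lastCases rk (fun i : Fin N => DFPoly.sigma ((E.symm i) : Finset (Finset (Fin d))) rk)
    with hrks
  set a : Fin (N + 1) → ℤ :=
    Fin.lastCases (-1)
      (fun i : Fin N => (-1 : ℤ) ^ (d - 1 + ((E.symm i) : Finset (Finset (Fin d))).card))
    with ha
  have hchain : ∀ i : Fin N, DFPoly.IsChain ((E.symm i) : Finset (Finset (Fin d))) := by
    intro i
    have h1 := (E.symm i).2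
    simp only [hs, chainFinset, Finset.mem_filter] at h1
    exact h1.2
  have hpolyall : ∀ m, IsPolymatroid d r (rks m) := by
    intro m
    induction m using Fin.lastCases with
    | last =>
      simp only [hrks, Fin.lastCases_last]
      exact hrk
    | cast i =>
      simp only [hrks, Fin.lastCases_castSucc]
      exact DFPoly.sigma_poly (hchain i) hrk
  have hzero : (∑ m, a m • indFn (polyQ (rks m))) = 0 := by
    funext y
    rw [Finset.sum_apply, Pi.zero_apply]
    have hsplit := Fin.sum_univ_castSucc
      (fun m => (a m • indFn (polyQ (rks m))) y)
    rw [hsplit]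
    simp only [hrks, ha, Fin.lastCases_castSucc, Fin.lastCases_last, Pi.smul_apply,
      smul_eq_mul]
    have hmain := DFMain.pointwise (d := d) (r := r) hd hrk y
    rw [← hs] at hmain
    have hsum2 : ∑ i : Fin N,
        (-1 : ℤ) ^ (d - 1 + ((E.symm i) : Finset (Finset (Fin d))).card) *
          indFn (polyQ (DFPoly.sigma ((E.symm i) : Finset (Finset (Fin d))) rk)) y
        = ∑ c ∈ s, (-1 : ℤ) ^ (d - 1 + c.card) * indFn (polyQ (DFPoly.sigma c rk)) y := by
      rw [← Finset.sum_coe_sort s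
        (fun c => (-1 : ℤ) ^ (d - 1 + c.card) * indFn (polyQ (DFPoly.sigma c rk)) y)]
      exact Equiv.sum_comp E.symm
        (fun x : {x // x ∈ s} =>
          (-1 : ℤ) ^ (d - 1 + (x : Finset (Finset (Fin d))).card) *
            indFn (polyQ (DFPoly.sigma (x : Finset (Finset (Fin d))) rk)) y)
    rw [hsum2, hmain]
    ring
  have hconc := hval (N + 1) rks a hpolyall hzero
  rw [Fin.sum_univ_castSucc] at hconc
  simp only [hrks, ha, Fin.lastCases_castSucc, Fin.lastCases_last] at hconc
  have hsum3 : ∑ i : Fin N,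
      (-1 : ℤ) ^ (d - 1 + ((E.symm i) : Finset (Finset (Fin d))).card) *
        f (DFPoly.sigma ((E.symm i) : Finset (Finset (Fin d))) rk)
      = ∑ c ∈ s, (-1 : ℤ) ^ (d - 1 + c.card) * f (DFPoly.sigma c rk) := by
    rw [← Finset.sum_coe_sort s
      (fun c => (-1 : ℤ) ^ (d - 1 + c.card) * f (DFPoly.sigma c rk))]
    exact Equiv.sum_comp E.symm
      (fun x : {x // x ∈ s} =>
        (-1 : ℤ) ^ (d - 1 + (x : Finset (Finset (Fin d))).card) *
          f (DFPoly.sigma (x : Finset (Finset (Fin d))) rk))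
  rw [hsum3] at hconc
  linarith

section Ext
variable {d : ℕ}

/-- weight of an element: number of chain members containing it -/
noncomputable def cw (c : Finset (Finset (Fin d))) (i : Fin d) : ℕ :=
  (c.filter (fun S => i ∈ S)).card

/-- sort key: elements in more chain members come first; ties broken by index -/
noncomputable def ckey (c : Finset (Finset (Fin d))) (i : Fin d) : ℕ :=
  i.val + (c.card - cw c i) * d

/-- the sorting permutation -/
noncomputable def cperm (c : Finset (Finset (Fin d))) : Equiv.Perm (Fin d) :=
  Tuple.sort (ckey c)

/-- the canonical maximal chain through `c` -/
noncomputable def extChain (c : Finset (Finset (Fin d))) (j : Fin d) : Finset (Fin d) :=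
  (Finset.Iic j).image (cperm c)

lemma cw_le (c : Finset (Finset (Fin d))) (i : Fin d) : cw c i ≤ c.card :=
  Finset.card_le_card (Finset.filter_subset _ _)

lemma ckey_inj (c : Finset (Finset (Fin d))) : Function.Injective (ckey c) := by
  intro i i' h
  have hi : i.val < d := i.2
  have hi' : i'.val < d := i'.2
  unfold ckey at h
  have h1 := congrArg (· % d) h
  simp only [Nat.add_mul_mod_self_right] at h1
  rw [Nat.mod_eq_of_lt hi, Nat.mod_eq_of_lt hi'] at h1
  exact Fin.ext h1

lemma ckey_sorted (c : Finset (Finset (Fin d))) :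
    StrictMono (ckey c ∘ (cperm c)) :=
  (Tuple.monotone_sort (ckey c)).strictMono_of_injective
    ((ckey_inj c).comp (cperm c).injective)

lemma extChain_card (c : Finset (Finset (Fin d))) (j : Fin d) :
    (extChain c j).card = j.val + 1 := by
  rw [extChain, Finset.card_image_of_injective _ (cperm c).injective, Fin.card_Iic]

lemma extChain_mono (c : Finset (Finset (Fin d))) : StrictMono (extChain c) := by
  intro j j' hjj
  rw [Finset.lt_iff_ssubset, Finset.ssubset_iff_subset_ne]
  constructor
  · exact Finset.image_subset_image (Finset.Iic_subset_Iic.mpr hjj.le)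
  · intro h
    have := extChain_card c j
    rw [h, extChain_card c j'] at this
    have := hjj
    omega

lemma extChain_last (hd : 1 ≤ d) (c : Finset (Finset (Fin d))) :
    extChain c ⟨d - 1, Nat.sub_lt hd Nat.one_pos⟩ = Finset.univ := by
  apply Finset.eq_univ_of_card
  rw [extChain_card, Fintype.card_fin]
  show d - 1 + 1 = d
  omega

/-- super-level characterization of chain members -/
lemma chain_mem_levels {c : Finset (Finset (Fin d))} (hc : DFPoly.IsChain c)
    {S : Finset (Fin d)} (hS : S ∈ c) (i : Fin d) :
    i ∈ S ↔ (c.filter (fun T => S ⊆ T)).card ≤ cw c i := by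
  constructor
  · intro hi
    apply Finset.card_le_card
    intro T hT
    rw [Finset.mem_filter] at hT ⊢
    exact ⟨hT.1, hT.2 hi⟩
  · intro hle
    by_contra hi
    have hsub : c.filter (fun S' => i ∈ S') ⊆ (c.filter (fun T => S ⊆ T)).erase S := by
      intro T hT
      rw [Finset.mem_filter] at hT
      rw [Finset.mem_erase, Finset.mem_filter]
      have hST : S ⊆ T := by
        rcases hc.2 T hT.1 S hS with h | h
        · exact absurd (h hT.2) hi
        · exact h
      refine ⟨?_, hT.1, hST⟩
      intro h
      exact hi (h ▸ hT.2)
    have h1 : cw c i ≤ ((c.filter (fun T => S ⊆ T)).erase S).card :=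
      Finset.card_le_card hsub
    have hSmem : S ∈ c.filter (fun T => S ⊆ T) :=
      Finset.mem_filter.mpr ⟨hS, Finset.Subset.rfl⟩
    rw [Finset.card_erase_of_mem hSmem] at h1
    have h2 : 1 ≤ (c.filter (fun T => S ⊆ T)).card := Finset.card_pos.mpr ⟨S, hSmem⟩
    omega

lemma extChain_hits {c : Finset (Finset (Fin d))} (hc : DFPoly.IsChain c)
    {S : Finset (Fin d)} (hS : S ∈ c) :
    extChain c ⟨S.card - 1, by
      have h1 : S.card ≤ d := by
        have := Finset.card_le_card (Finset.subset_univ S)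
        rwa [Finset.card_univ, Fintype.card_fin] at this
      have h2 : S ≠ Finset.univ := (hc.1 S hS).2.ne
      have h3 : S.card ≠ d := by
        intro h
        exact h2 (Finset.eq_univ_of_card S (by rw [h, Fintype.card_fin]))
      omega⟩ = S := by
  have hSne : S ≠ ∅ := (hc.1 S hS).1
  have hScard : 1 ≤ S.card := Finset.card_pos.mpr (Finset.nonempty_of_ne_empty hSne)
  set jS : Fin d := ⟨S.card - 1, by
    have h1 : S.card ≤ d := by
      have := Finset.card_le_card (Finset.subset_univ S)
      rwa [Finset.card_univ, Fintype.card_fin] at this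
    have h2 : S ≠ Finset.univ := (hc.1 S hS).2.ne
    have h3 : S.card ≠ d := by
      intro h
      exact h2 (Finset.eq_univ_of_card S (by rw [h, Fintype.card_fin]))
    omega⟩ with hjS
  set tS : ℕ := (c.filter (fun T => S ⊆ T)).card with htS
  -- first: image ⊆ S
  have hsub : extChain c jS ⊆ S := by
    intro i hi
    rw [extChain, Finset.mem_image] at hi
    obtain ⟨t, ht, hti⟩ := hi
    rw [Finset.mem_Iic] at ht
    by_contra hiS
    -- w i < tS; all elements of S come strictly before position t
    have hwi : cw c i < tS := by
      have := (chain_mem_levels hc hS i).not.mp hiS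
      omega
    have hmapS : ∀ a ∈ S, ((cperm c).symm a : Fin d) < t := by
      intro a ha
      have hwa : tS ≤ cw c a := (chain_mem_levels hc hS a).mp ha
      have hka : ckey c a < ckey c i := by
        unfold ckey
        have h4 := cw_le c a
        have h5 := cw_le c i
        have h6 : c.card - cw c a < c.card - cw c i := by omega
        have h7 : a.val < d := a.2
        calc a.val + (c.card - cw c a) * d < d + (c.card - cw c a) * d := by omega
          _ = (c.card - cw c a + 1) * d := by ring
          _ ≤ (c.card - cw c i) * d := Nat.mul_le_mul_right d (by omega)
          _ ≤ i.val + (c.card - cw c i) * d := Nat.le_add_left _ _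
      by_contra hta
      push_neg at hta
      have := (ckey_sorted c).monotone hta
      simp only [Function.comp_apply] at this
      rw [Equiv.apply_symm_apply, hti] at this
      omega
    -- so symm maps S injectively into Iio t, giving S.card ≤ t
    have hcard : S.card ≤ t.val := by
      have himg : S.image ((cperm c).symm) ⊆ Finset.Iio t := by
        intro u hu
        rw [Finset.mem_image] at hu
        obtain ⟨a, ha, hau⟩ := hu
        rw [Finset.mem_Iio, ← hau]
        exact hmapS a ha
      have := Finset.card_le_card himg
      rw [Finset.card_image_of_injective _ (cperm c).symm.injective, Fin.card_Iio] at this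
      exact this
    have : t.val ≤ S.card - 1 := ht
    omega
  have hcard2 : S.card ≤ (extChain c jS).card := by
    rw [extChain_card]
    simp only [hjS]
    omega
  exact Finset.eq_of_subset_of_card_le hsub hcard2

end Ext

section Assemble
variable {d r : ℕ}

noncomputable def posIdx (hd : 1 ≤ d) (S : Finset (Fin d)) : Fin d :=
  ⟨S.card - 1, by
    have := Finset.card_le_univ S
    rw [Fintype.card_fin] at this
    omega⟩

noncomputable def vP (hd : 1 ≤ d) (w : Fin d → ℤ) : Finset (Fin d) → ℕ :=
  fun S => (w (posIdx hd S)).toNat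

lemma sigma_vP (hd : 1 ≤ d) {c : Finset (Finset (Fin d))} (hc : DFPoly.IsChain c)
    (rk : Finset (Fin d) → ℕ) :
    DFPoly.sigma c (vP hd (fun j => (rk (extChain c j) : ℤ)))
      = DFPoly.sigma c rk := by
  funext A
  unfold DFPoly.sigma
  by_cases hA : A = ∅
  · simp [hA]
  rw [if_neg hA, if_neg hA]
  obtain ⟨hmem, -, -⟩ := DFPoly.minSup_spec hc A
  have hkey : extChain c (posIdx hd (DFPoly.minSup c A)) = DFPoly.minSup c A := by
    rcases Finset.mem_insert.mp hmem with h | h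
    · rw [h]
      have hval : posIdx hd (Finset.univ : Finset (Fin d)) = ⟨d - 1, by omega⟩ := by
        apply Fin.ext
        show (Finset.univ : Finset (Fin d)).card - 1 = d - 1
        rw [Finset.card_univ, Fintype.card_fin]
      rw [hval, extChain_last hd]
    · have := extChain_hits hc h
      have hval : posIdx hd (DFPoly.minSup c A) = ⟨(DFPoly.minSup c A).card - 1, by
          have h1 := Finset.card_le_univ (DFPoly.minSup c A)
          rw [Fintype.card_fin] at h1
          omega⟩ := by
        apply Fin.ext
        rfl
      rw [hval]
      exact this
  rw [vP, hkey, Int.toNat_natCast]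

end Assemble

end DFMain



/-- Corollary `cor maximal chains`: every valuative ℤ-valued function on polymatroids of
rank `r` on `{1,…,d}` is an integral linear combination of the functions `s_{X̲,r̲}` where
`X̲` is a maximal chain (so `|X_j| = j`) and `0 ≤ r_1 ≤ ⋯ ≤ r_d = r`. -/
theorem valuative_eq_sum_s_maximal_chains (d r : ℕ) (hd : 1 ≤ d)
    (f : (Finset (Fin d) → ℕ) → ℤ)
    (hval : ∀ (n : ℕ) (rks : Fin n → Finset (Fin d) → ℕ) (a : Fin n → ℤ),
      (∀ m, IsPolymatroid d r (rks m)) →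
      (∑ m, a m • indFn (polyQ (rks m))) = 0 →
      (∑ m, a m * f (rks m)) = 0) :
    ∃ c : {p : (Fin d → Finset (Fin d)) × (Fin d → ℤ) //
        StrictMono p.1 ∧ (∀ j : Fin d, (p.1 j).card = (j : ℕ) + 1) ∧
        p.1 ⟨d - 1, by omega⟩ = Finset.univ ∧
        Monotone p.2 ∧ 0 ≤ p.2 ⟨0, hd⟩ ∧ p.2 ⟨d - 1, by omega⟩ = (r : ℤ)} → ℤ,
      ∀ rk : Finset (Fin d) → ℕ, IsPolymatroid d r rk →
        f rk = ∑ᶠ p, c p * (if ∀ j : Fin d, (rk (p.1.1 j) : ℤ) = p.1.2 j then 1 else 0) := by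
  classical
  -- bounds on the second component of index pairs
  have hbnd : ∀ p : {p : (Fin d → Finset (Fin d)) × (Fin d → ℤ) //
      StrictMono p.1 ∧ (∀ j : Fin d, (p.1 j).card = (j : ℕ) + 1) ∧
      p.1 ⟨d - 1, Nat.sub_lt hd Nat.one_pos⟩ = Finset.univ ∧
      Monotone p.2 ∧ 0 ≤ p.2 ⟨0, hd⟩ ∧ p.2 ⟨d - 1, Nat.sub_lt hd Nat.one_pos⟩ = (r : ℤ)},
      ∀ j : Fin d, 0 ≤ p.1.2 j ∧ p.1.2 j ≤ (r : ℤ) := by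
    intro p j
    have h0 : (⟨0, hd⟩ : Fin d) ≤ j := by
      rw [Fin.le_def]
      exact Nat.zero_le _
    have h1 : j ≤ (⟨d - 1, Nat.sub_lt hd Nat.one_pos⟩ : Fin d) := by
      rw [Fin.le_def]
      have := j.2
      simp only
      omega
    refine ⟨le_trans p.2.2.2.2.2.1 (p.2.2.2.2.1 h0), ?_⟩
    exact le_of_le_of_eq (p.2.2.2.2.1 h1) p.2.2.2.2.2.2
  have hfin : Finite {p : (Fin d → Finset (Fin d)) × (Fin d → ℤ) //
      StrictMono p.1 ∧ (∀ j : Fin d, (p.1 j).card = (j : ℕ) + 1) ∧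
      p.1 ⟨d - 1, Nat.sub_lt hd Nat.one_pos⟩ = Finset.univ ∧
      Monotone p.2 ∧ 0 ≤ p.2 ⟨0, hd⟩ ∧ p.2 ⟨d - 1, Nat.sub_lt hd Nat.one_pos⟩ = (r : ℤ)} := by
    apply Finite.of_injective
      (β := (Fin d → Finset (Fin d)) × (Fin d → Fin (r + 1)))
      (fun p => (p.1.1, fun j => ⟨(p.1.2 j).toNat,
        Nat.lt_succ_of_le (Int.toNat_le.mpr (hbnd p j).2)⟩))
    intro p q h
    rw [Prod.mk.injEq] at h
    apply Subtype.ext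
    apply Prod.ext h.1
    funext j
    have h2 := congrFun h.2 j
    rw [Fin.mk.injEq] at h2
    have h3 := Int.toNat_of_nonneg (hbnd p j).1
    have h4 := Int.toNat_of_nonneg (hbnd q j).1
    rw [← h3, ← h4, h2]
  letI := Fintype.ofFinite {p : (Fin d → Finset (Fin d)) × (Fin d → ℤ) //
      StrictMono p.1 ∧ (∀ j : Fin d, (p.1 j).card = (j : ℕ) + 1) ∧
      p.1 ⟨d - 1, Nat.sub_lt hd Nat.one_pos⟩ = Finset.univ ∧
      Monotone p.2 ∧ 0 ≤ p.2 ⟨0, hd⟩ ∧ p.2 ⟨d - 1, Nat.sub_lt hd Nat.one_pos⟩ = (r : ℤ)}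
  refine ⟨fun p => ∑ c ∈ DFMain.chainFinset d,
    if DFMain.extChain c = p.1.1 then
      (-1 : ℤ) ^ (d - 1 + c.card) * f (DFPoly.sigma c (DFMain.vP hd p.1.2)) else 0, ?_⟩
  intro rk hrk
  rw [finsum_eq_sum_of_fintype]
  have hstep1 : ∀ p : {p : (Fin d → Finset (Fin d)) × (Fin d → ℤ) //
      StrictMono p.1 ∧ (∀ j : Fin d, (p.1 j).card = (j : ℕ) + 1) ∧
      p.1 ⟨d - 1, Nat.sub_lt hd Nat.one_pos⟩ = Finset.univ ∧
      Monotone p.2 ∧ 0 ≤ p.2 ⟨0, hd⟩ ∧ p.2 ⟨d - 1, Nat.sub_lt hd Nat.one_pos⟩ = (r : ℤ)},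
      (∑ c ∈ DFMain.chainFinset d,
        if DFMain.extChain c = p.1.1 then
          (-1 : ℤ) ^ (d - 1 + c.card) * f (DFPoly.sigma c (DFMain.vP hd p.1.2)) else 0) *
        (if ∀ j : Fin d, (rk (p.1.1 j) : ℤ) = p.1.2 j then 1 else 0)
      = ∑ c ∈ DFMain.chainFinset d,
        ((if DFMain.extChain c = p.1.1 then
          (-1 : ℤ) ^ (d - 1 + c.card) * f (DFPoly.sigma c (DFMain.vP hd p.1.2)) else 0) *
          (if ∀ j : Fin d, (rk (p.1.1 j) : ℤ) = p.1.2 j then 1 else 0)) :=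
    fun p => Finset.sum_mul _ _ _
  rw [Finset.sum_congr rfl (fun p _ => hstep1 p), Finset.sum_comm]
  have hstep2 : ∀ c ∈ DFMain.chainFinset d,
      (∑ p : {p : (Fin d → Finset (Fin d)) × (Fin d → ℤ) //
        StrictMono p.1 ∧ (∀ j : Fin d, (p.1 j).card = (j : ℕ) + 1) ∧
        p.1 ⟨d - 1, Nat.sub_lt hd Nat.one_pos⟩ = Finset.univ ∧
        Monotone p.2 ∧ 0 ≤ p.2 ⟨0, hd⟩ ∧ p.2 ⟨d - 1, Nat.sub_lt hd Nat.one_pos⟩ = (r : ℤ)},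
        ((if DFMain.extChain c = p.1.1 then
          (-1 : ℤ) ^ (d - 1 + c.card) * f (DFPoly.sigma c (DFMain.vP hd p.1.2)) else 0) *
          (if ∀ j : Fin d, (rk (p.1.1 j) : ℤ) = p.1.2 j then 1 else 0)))
      = (-1 : ℤ) ^ (d - 1 + c.card) * f (DFPoly.sigma c rk) := by
    intro c hc
    have hchain : DFPoly.IsChain c := (Finset.mem_filter.mp hc).2
    have hp0prop : StrictMono (DFMain.extChain c) ∧
        (∀ j : Fin d, ((DFMain.extChain c) j).card = (j : ℕ) + 1) ∧
        (DFMain.extChain c) ⟨d - 1, Nat.sub_lt hd Nat.one_pos⟩ = Finset.univ ∧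
        Monotone (fun j => (rk (DFMain.extChain c j) : ℤ)) ∧
        0 ≤ (rk (DFMain.extChain c ⟨0, hd⟩) : ℤ) ∧
        (rk (DFMain.extChain c ⟨d - 1, Nat.sub_lt hd Nat.one_pos⟩) : ℤ) = (r : ℤ) := by
      refine ⟨DFMain.extChain_mono c, DFMain.extChain_card c, DFMain.extChain_last hd c,
        ?_, Int.natCast_nonneg _, ?_⟩
      · intro j j' hjj
        have h9 := hrk.2.1 _ _ ((DFMain.extChain_mono c).monotone hjj)
        show (rk (DFMain.extChain c j) : ℤ) ≤ (rk (DFMain.extChain c j') : ℤ)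
        exact_mod_cast h9
      · rw [DFMain.extChain_last hd c, hrk.2.2.2]
    set p₀ : {p : (Fin d → Finset (Fin d)) × (Fin d → ℤ) //
        StrictMono p.1 ∧ (∀ j : Fin d, (p.1 j).card = (j : ℕ) + 1) ∧
        p.1 ⟨d - 1, Nat.sub_lt hd Nat.one_pos⟩ = Finset.univ ∧
        Monotone p.2 ∧ 0 ≤ p.2 ⟨0, hd⟩ ∧ p.2 ⟨d - 1, Nat.sub_lt hd Nat.one_pos⟩ = (r : ℤ)} :=
      ⟨(DFMain.extChain c, fun j => (rk (DFMain.extChain c j) : ℤ)), hp0prop⟩ with hp₀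
    rw [Finset.sum_eq_single p₀]
    · rw [hp₀]
      rw [if_pos rfl, if_pos (fun j => rfl), mul_one]
      congr 1
      exact congrArg f (DFMain.sigma_vP hd hchain rk)
    · intro p _ hne
      by_cases hext : DFMain.extChain c = p.1.1
      · by_cases hW : ∀ j : Fin d, (rk (p.1.1 j) : ℤ) = p.1.2 j
        · exfalso
          apply hne
          apply Subtype.ext
          apply Prod.ext hext.symm
          funext j
          rw [← hW j, ← hext]
        · rw [if_neg hW, mul_zero]
      · rw [if_neg hext, zero_mul]
    · intro habs
      exact absurd (Finset.mem_univ p₀) habs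
  rw [Finset.sum_congr rfl hstep2]
  exact DFMain.keyE d r hd f hval rk hrk
end
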